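/- arXiv:0903.3342 — 2 statements merged into one kernel-verified Lean document; each statement's English description precedes it below -/
import Mathlib

section
/- For every n ≥ 1, (1/n!) · Σ_{F ∈ F(n)} ∏_{v ∈ F} 2(2h_v − 2)!! / (h_v · (2h_v − 3)!!) = C(2n, n), where F(n) is the set of labeled rooted forests on vertex set {1,...,n}, m!! = m(m−2)(m−4)··· with 0!! = (−1)!! = 1, and C(2n,n) is the central binomial coefficient. -/
/-- The parent relation associated to a parent map on `Fin n`. -/
def parentRel {n : ℕ} (p : Fin n → Option (Fin n)) : Fin n → Fin n → Prop :=
  fun a b => p a = some b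

/-- A parent map on `{1, …, n}` is a (labeled rooted) forest if it has no cycles. -/
def IsRForest {n : ℕ} (p : Fin n → Option (Fin n)) : Prop :=
  ∀ v, ¬ Relation.TransGen (parentRel p) v v

/-- A labeled rooted tree on `{1, …, n}`: an acyclic parent map with a unique root. -/
def IsRTree {n : ℕ} (p : Fin n → Option (Fin n)) : Prop :=
  IsRForest p ∧ ∃! r, p r = none

/-- The hook length of `v`: the number of descendants of `v`, counting `v` itself. -/
noncomputable def hookLen {n : ℕ} (p : Fin n → Option (Fin n)) (v : Fin n) : ℕ :=
  Nat.card {u : Fin n // Relation.ReflTransGen (parentRel p) u v}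

lemma hookLen_pos {n : ℕ} (p : Fin n → Option (Fin n)) (v : Fin n) : 0 < hookLen p v :=
  @Nat.card_pos _ ⟨⟨v, Relation.ReflTransGen.refl⟩⟩ _

/-- The hook length of `v` as a positive natural number. -/
noncomputable def hook {n : ℕ} (p : Fin n → Option (Fin n)) (v : Fin n) : ℕ+ :=
  ⟨hookLen p v, hookLen_pos p v⟩

set_option linter.unusedSectionVars false
set_option linter.unusedVariables false
open Relation Finset

section Defs
variable {α : Type*}

def pRel (p : α → Option α) : α → α → Prop := fun a b => p a = some b

def isForest (p : α → Option α) : Prop := ∀ v, ¬ Relation.TransGen (pRel p) v v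

noncomputable def hkn (p : α → Option α) (v : α) : ℕ :=
  Nat.card {u : α // Relation.ReflTransGen (pRel p) u v}

noncomputable def wt (h : ℕ) : ℚ :=
  2 * (Nat.doubleFactorial (2 * h - 2) : ℚ) /
    ((h : ℚ) * (Nat.doubleFactorial (2 * h - 3) : ℚ))

noncomputable def forestSet (α : Type*) [Fintype α] [DecidableEq α] : Finset (α → Option α) :=
  @Finset.filter _ (fun p => isForest p) (Classical.decPred _) Finset.univ

noncomputable def Gsum (α : Type*) [Fintype α] [DecidableEq α] : ℚ :=
  ∑ p ∈ forestSet α, ∏ v, wt (hkn p v)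

lemma mem_forestSet {α : Type*} [Fintype α] [DecidableEq α] {p : α → Option α} :
    p ∈ forestSet α ↔ isForest p := by
  simp [forestSet]

end Defs

section Root
variable {α : Type*} [Fintype α] {p : α → Option α}

lemma wf_rev (hp : isForest p) : WellFounded (fun u v => pRel p v u) := by
  have h1 : IsIrrefl α (TransGen (Function.swap (pRel p))) :=
    ⟨fun v hv => hp v (Relation.transGen_swap.mp hv)⟩
  have h2 : IsTrans α (TransGen (Function.swap (pRel p))) := inferInstance
  exact @Subrelation.wf α (TransGen (Function.swap (pRel p))) _
    (fun h => TransGen.single h)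
    (Finite.wellFounded_of_trans_of_irrefl (TransGen (Function.swap (pRel p))))

lemma exists_root (hp : isForest p) (a : α) :
    ∃ r, ReflTransGen (pRel p) a r ∧ p r = none := by
  refine (wf_rev hp).induction (C := fun a => ∃ r, ReflTransGen (pRel p) a r ∧ p r = none)
    a (fun a ih => ?_)
  cases h : p a with
  | none => exact ⟨a, .refl, h⟩
  | some b =>
    obtain ⟨r, hr, hn⟩ := ih b h
    exact ⟨r, .head h hr, hn⟩

lemma root_unique {a r r' : α} (h : ReflTransGen (pRel p) a r) (hr : p r = none)
    (hr' : p r' = none) : ReflTransGen (pRel p) a r' → r = r' := by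
  induction h using Relation.ReflTransGen.head_induction_on with
  | refl =>
    intro h'
    rcases h'.cases_head with rfl | ⟨c, hc, _⟩
    · rfl
    · have hc' : p r = some c := hc
      rw [hr] at hc'; cases hc'
  | @head x c0 h' hcb ih =>
    intro h2
    rcases h2.cases_head with rfl | ⟨c, hc, hcr'⟩
    · have h'' : p x = some c0 := h'
      rw [hr'] at h''; cases h''
    · apply ih
      have : c = _ := Option.some.inj (hc.symm.trans h')
      exact this ▸ hcr'

open Classical in
noncomputable def rootD (p : α → Option α) (a : α) : α :=
  if h : ∃ r, Relation.ReflTransGen (pRel p) a r ∧ p r = none then h.choose else a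

lemma rootD_spec (hp : isForest p) (a : α) :
    ReflTransGen (pRel p) a (rootD p a) ∧ p (rootD p a) = none := by
  rw [rootD, dif_pos (exists_root hp a)]
  exact (exists_root hp a).choose_spec

lemma rootD_eq (hp : isForest p) {a r : α} (h1 : ReflTransGen (pRel p) a r)
    (h2 : p r = none) : rootD p a = r :=
  root_unique (rootD_spec hp a).1 (rootD_spec hp a).2 h2 h1

noncomputable def treeS (p : α → Option α) (a : α) : Finset α :=
  @Finset.filter _ (fun u => Relation.ReflTransGen (pRel p) u (rootD p a))
    (Classical.decPred _) Finset.univ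

lemma mem_treeS {a u : α} :
    u ∈ treeS p a ↔ ReflTransGen (pRel p) u (rootD p a) := by
  simp [treeS]

end Root
section Transfer
variable {α : Type*}

lemma rtg_closed {p : α → Option α} {P : α → Prop}
    (hstep : ∀ x y, P x → p x = some y → P y) {u v : α}
    (h : ReflTransGen (pRel p) u v) (hu : P u) : P v := by
  induction h with
  | refl => exact hu
  | tail h1 h2 ih => exact hstep _ _ ih h2

lemma rtg_step {p : α → Option α} {u v r : α} (hd : p u = some v)
    (h : ReflTransGen (pRel p) u r) (hr : p r = none) :
    ReflTransGen (pRel p) v r := by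
  rcases h.cases_head with rfl | ⟨c, hc, hcr⟩
  · rw [hr] at hd; cases hd
  · have : v = c := Option.some.inj ((hd.symm.trans hc))
    exact this ▸ hcr

variable {p : α → Option α} {T : Finset α} {q : {x // x ∈ T} → Option {x // x ∈ T}}

lemma transfer_rtg_up (H1 : ∀ x y : {x // x ∈ T}, pRel q x y ↔ pRel p x.1 y.1)
    {x y : {x // x ∈ T}} (h : ReflTransGen (pRel q) x y) :
    ReflTransGen (pRel p) x.1 y.1 :=
  h.lift Subtype.val (fun a b hab => (H1 a b).1 hab)

lemma transfer_rtg_down (H1 : ∀ x y : {x // x ∈ T}, pRel q x y ↔ pRel p x.1 y.1)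
    (H2 : ∀ x : {x // x ∈ T}, ∀ y, p x.1 = some y → y ∈ T ∨ p y = none)
    {x y : {x // x ∈ T}} (h : ReflTransGen (pRel p) x.1 y.1) :
    ReflTransGen (pRel q) x y := by
  suffices H : ∀ u, ReflTransGen (pRel p) u y.1 →
      ∀ hu : u ∈ T, ReflTransGen (pRel q) ⟨u, hu⟩ y by
    exact H x.1 h x.2
  intro u hru
  induction hru using Relation.ReflTransGen.head_induction_on with
  | refl =>
    intro hu
    have : (⟨y.1, hu⟩ : {x // x ∈ T}) = y := Subtype.ext rfl
    rw [this]
  | @head u c h' hcb ih =>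
    intro hu
    rcases H2 ⟨u, hu⟩ c h' with hc | hnc
    · exact (ih hc).head ((H1 ⟨u, hu⟩ ⟨c, hc⟩).2 h')
    · rcases hcb.cases_head with rfl | ⟨d, hd, _⟩
      · exact Relation.ReflTransGen.single ((H1 ⟨u, hu⟩ y).2 h')
      · have hd' : p c = some d := hd
        rw [hnc] at hd'; cases hd'

lemma transfer_cycle (H1 : ∀ x y : {x // x ∈ T}, pRel q x y ↔ pRel p x.1 y.1)
    (H2 : ∀ x : {x // x ∈ T}, ∀ y, p x.1 = some y → y ∈ T ∨ p y = none)
    {v : {x // x ∈ T}} (h : TransGen (pRel p) v.1 v.1) : TransGen (pRel q) v v := by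
  rcases Relation.TransGen.head'_iff.mp h with ⟨c, hvc, hcv⟩
  rcases H2 v c hvc with hc | hnc
  · exact Relation.TransGen.head' ((H1 v ⟨c, hc⟩).2 hvc)
      (transfer_rtg_down H1 H2 (x := ⟨c, hc⟩) hcv)
  · rcases hcv.cases_head with rfl | ⟨d, hd, _⟩
    · have hvc' : p v.1 = some v.1 := hvc
      rw [hnc] at hvc'; cases hvc'
    · have hd' : p c = some d := hd
      rw [hnc] at hd'; cases hd'

lemma transfer_forest (hp : isForest p)
    (H1 : ∀ x y : {x // x ∈ T}, pRel q x y ↔ pRel p x.1 y.1) : isForest q :=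
  fun v hv => hp v.1 (hv.lift Subtype.val fun a b hab => (H1 a b).1 hab)

lemma transfer_hk (H1 : ∀ x y : {x // x ∈ T}, pRel q x y ↔ pRel p x.1 y.1)
    (H2 : ∀ x : {x // x ∈ T}, ∀ y, p x.1 = some y → y ∈ T ∨ p y = none)
    (H3 : ∀ (v : {x // x ∈ T}) u, ReflTransGen (pRel p) u v.1 → u ∈ T)
    (v : {x // x ∈ T}) : hkn q v = hkn p v.1 :=
  Nat.card_congr
    ⟨fun u => ⟨u.1.1, transfer_rtg_up H1 u.2⟩,
     fun u => ⟨⟨u.1, H3 v u.1 u.2⟩, transfer_rtg_down H1 H2 u.2⟩,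
     fun u => Subtype.ext (Subtype.ext rfl), fun u => Subtype.ext rfl⟩

end Transfer
section Relabel
variable {α β : Type*}

def pm (e : α ≃ β) (p : α → Option α) : β → Option β :=
  fun b => Option.map e (p (e.symm b))

lemma pm_edge {e : α ≃ β} {p : α → Option α} {u v : α} :
    pRel (pm e p) (e u) (e v) ↔ pRel p u v := by
  unfold pRel pm
  rw [e.symm_apply_apply]
  constructor
  · intro h
    rcases Option.map_eq_some_iff.mp h with ⟨a, ha, hav⟩
    rwa [e.injective hav] at ha
  · intro h
    rw [h]; rfl

lemma pm_edge' {e : α ≃ β} {p : α → Option α} {a b : β} (h : pRel (pm e p) a b) :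
    pRel p (e.symm a) (e.symm b) :=
  pm_edge.mp (by rwa [e.apply_symm_apply, e.apply_symm_apply])

lemma pm_pm (e : α ≃ β) (p : α → Option α) : pm e.symm (pm e p) = p := by
  funext a
  simp [pm, Option.map_map]

lemma pm_rtg {e : α ≃ β} {p : α → Option α} {u v : α}
    (h : ReflTransGen (pRel p) u v) : ReflTransGen (pRel (pm e p)) (e u) (e v) :=
  h.lift e (fun a b hab => pm_edge.mpr hab)

lemma pm_rtg' {e : α ≃ β} {p : α → Option α} {u v : β}
    (h : ReflTransGen (pRel (pm e p)) u v) :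
    ReflTransGen (pRel p) (e.symm u) (e.symm v) :=
  h.lift e.symm (fun a b hab => pm_edge' hab)

lemma pm_forest {e : α ≃ β} {p : α → Option α} (hp : isForest p) :
    isForest (pm e p) := fun v hv =>
  hp (e.symm v) (hv.lift e.symm fun a b hab => pm_edge' hab)

lemma pm_hkn {e : α ≃ β} {p : α → Option α} (v : α) :
    hkn (pm e p) (e v) = hkn p v := by
  apply Nat.card_congr
  refine ⟨fun u => ⟨e.symm u.1, ?_⟩, fun u => ⟨e u.1, pm_rtg u.2⟩, ?_, ?_⟩
  · have := pm_rtg' u.2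
    rwa [e.symm_apply_apply] at this
  · intro u; exact Subtype.ext (by simp)
  · intro u; exact Subtype.ext (by simp)

lemma Gsum_congr [Fintype α] [DecidableEq α] [Fintype β] [DecidableEq β] (e : α ≃ β) :
    Gsum α = Gsum β := by
  unfold Gsum
  refine Finset.sum_nbij' (i := pm e) (j := pm e.symm) ?_ ?_ ?_ ?_ ?_
  · intro p hp
    exact mem_forestSet.mpr (pm_forest (mem_forestSet.mp hp))
  · intro p hp
    exact mem_forestSet.mpr (pm_forest (mem_forestSet.mp hp))
  · intro p _; exact pm_pm e p
  · intro p _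
    have := pm_pm e.symm p
    rwa [e.symm_symm] at this
  · intro p _
    exact Fintype.prod_equiv e _ _ (fun v => by rw [pm_hkn])

lemma Gsum_eq_gseq (α : Type*) [Fintype α] [DecidableEq α] :
    Gsum α = Gsum (Fin (Fintype.card α)) :=
  Gsum_congr (Fintype.equivFin α)

end Relabel
section GlueSplit
variable {α : Type*} [Fintype α] [DecidableEq α] {S : Finset α} {r : α}

def glue (S : Finset α) (r : α) (q₁ : {x // x ∈ S.erase r} → Option {x // x ∈ S.erase r})
    (q₂ : {x // x ∈ Sᶜ} → Option {x // x ∈ Sᶜ}) : α → Option α :=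
  fun x =>
    if hx : x ∈ S.erase r then some ((q₁ ⟨x, hx⟩).elim r Subtype.val)
    else if hx2 : x ∈ Sᶜ then Option.map Subtype.val (q₂ ⟨x, hx2⟩)
    else none

variable {q₁ : {x // x ∈ S.erase r} → Option {x // x ∈ S.erase r}}
  {q₂ : {x // x ∈ Sᶜ} → Option {x // x ∈ Sᶜ}}

lemma glue_erase' (x : {x // x ∈ S.erase r}) :
    glue S r q₁ q₂ x.1 = some ((q₁ x).elim r Subtype.val) := dif_pos x.2

lemma glue_r (hr : r ∈ S) : glue S r q₁ q₂ r = none := by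
  unfold glue
  rw [dif_neg (Finset.notMem_erase r S), dif_neg (by simp [hr])]

lemma glue_compl' (x : {x // x ∈ Sᶜ}) :
    glue S r q₁ q₂ x.1 = Option.map Subtype.val (q₂ x) := by
  have hx : x.1 ∉ S := Finset.mem_compl.mp x.2
  unfold glue
  rw [dif_neg (fun h => hx (Finset.mem_of_mem_erase h)), dif_pos x.2]

lemma glue_H1e (hr : r ∈ S) (x y : {x // x ∈ S.erase r}) :
    pRel q₁ x y ↔ pRel (glue S r q₁ q₂) x.1 y.1 := by
  unfold pRel
  rw [glue_erase' x]
  cases hq : q₁ x with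
  | none =>
    simp only [Option.elim]
    constructor
    · intro h; cases h
    · intro h
      have : r = y.1 := Option.some.inj h
      exact absurd this.symm (Finset.ne_of_mem_erase y.2)
  | some z =>
    simp only [Option.elim]
    constructor
    · intro h; rw [Option.some.inj h]
    · intro h; rw [Subtype.ext (Option.some.inj h)]

lemma glue_H1c (x y : {x // x ∈ Sᶜ}) :
    pRel q₂ x y ↔ pRel (glue S r q₁ q₂) x.1 y.1 := by
  unfold pRel
  rw [glue_compl' x]
  cases hq : q₂ x with
  | none => simp
  | some z =>
    simp only [Option.map_some]
    constructor
    · intro h; rw [Option.some.inj h]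
    · intro h; rw [Subtype.ext (Option.some.inj h)]

lemma glue_H2e (hr : r ∈ S) (x : {x // x ∈ S.erase r}) (y : α)
    (h : glue S r q₁ q₂ x.1 = some y) :
    y ∈ S.erase r ∨ glue S r q₁ q₂ y = none := by
  rw [glue_erase' x] at h
  cases hq : q₁ x with
  | none =>
    right
    rw [hq] at h
    simp only [Option.elim] at h
    rw [← Option.some.inj h]
    exact glue_r hr
  | some z =>
    left
    rw [hq] at h
    simp only [Option.elim] at h
    rw [← Option.some.inj h]
    exact z.2

lemma glue_H2c (x : {x // x ∈ Sᶜ}) (y : α)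
    (h : glue S r q₁ q₂ x.1 = some y) :
    y ∈ Sᶜ ∨ glue S r q₁ q₂ y = none := by
  rw [glue_compl' x] at h
  rcases Option.map_eq_some_iff.mp h with ⟨z, _, hz⟩
  exact Or.inl (hz ▸ z.2)

lemma glue_stepS (hr : r ∈ S) (x y : α) (hx : x ∈ S)
    (h : glue S r q₁ q₂ x = some y) : y ∈ S := by
  by_cases hxe : x ∈ S.erase r
  · rcases glue_H2e (q₂ := q₂) hr ⟨x, hxe⟩ y h with h' | h'
    · exact Finset.mem_of_mem_erase h'
    · -- y has glue y = none; but we must still show y ∈ S; reconsider: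
      -- from proof of H2e, y is either q₁-val or r; in the none case y = r ∈ S
      rw [glue_erase' (q₁ := q₁) (q₂ := q₂) ⟨x, hxe⟩] at h
      cases hq : q₁ ⟨x, hxe⟩ with
      | none => rw [hq] at h; simp only [Option.elim] at h; rw [← Option.some.inj h]; exact hr
      | some z =>
        rw [hq] at h; simp only [Option.elim] at h
        rw [← Option.some.inj h]; exact Finset.mem_of_mem_erase z.2
  · have hxr : x = r := by
      by_contra hne
      exact hxe (Finset.mem_erase.mpr ⟨hne, hx⟩)
    rw [hxr, glue_r hr] at h
    cases h

lemma glue_stepC (x y : α) (hx : x ∉ S)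
    (h : glue S r q₁ q₂ x = some y) : y ∉ S := by
  have hx' : x ∈ Sᶜ := Finset.mem_compl.mpr hx
  rcases glue_H2c (q₁ := q₁) ⟨x, hx'⟩ y h with h' | h'
  · exact Finset.mem_compl.mp h'
  ·
    rcases Option.map_eq_some_iff.mp ((glue_compl' (q₁ := q₁) ⟨x, hx'⟩) ▸ h) with ⟨z, _, hz⟩
    exact Finset.mem_compl.mp (hz ▸ z.2)

lemma glue_rtgS (hr : r ∈ S) {u v : α} (h : ReflTransGen (pRel (glue S r q₁ q₂)) u v)
    (hu : u ∈ S) : v ∈ S :=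
  rtg_closed (fun x y hx hxy => glue_stepS hr x y hx hxy) h hu

lemma glue_rtgC {u v : α} (h : ReflTransGen (pRel (glue S r q₁ q₂)) u v)
    (hu : u ∉ S) : v ∉ S :=
  rtg_closed (fun x y hx hxy => glue_stepC x y hx hxy) h hu

lemma glue_H3e (hr : r ∈ S) (v : {x // x ∈ S.erase r}) (u : α)
    (h : ReflTransGen (pRel (glue S r q₁ q₂)) u v.1) : u ∈ S.erase r := by
  refine Finset.mem_erase.mpr ⟨?_, ?_⟩
  · rintro rfl
    rcases h.cases_head with heq | ⟨c, hc, _⟩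
    · exact Finset.ne_of_mem_erase v.2 heq.symm
    · have hc' : glue _ _ q₁ q₂ _ = some c := hc
      rw [glue_r hr] at hc'; cases hc'
  · by_contra hu
    exact glue_rtgC h hu (Finset.mem_of_mem_erase v.2)

lemma glue_H3c (hr : r ∈ S) (v : {x // x ∈ Sᶜ}) (u : α)
    (h : ReflTransGen (pRel (glue S r q₁ q₂)) u v.1) : u ∈ Sᶜ := by
  refine Finset.mem_compl.mpr (fun hu => ?_)
  exact Finset.mem_compl.mp v.2 (glue_rtgS hr h hu)

lemma glue_forest (hr : r ∈ S) (h1 : isForest q₁) (h2 : isForest q₂) :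
    isForest (glue S r q₁ q₂) := by
  intro v hv
  by_cases hvS : v ∈ S
  · by_cases hvr : v = r
    · subst hvr
      rcases Relation.TransGen.head'_iff.mp hv with ⟨c, hc, _⟩
      have hc' : glue _ _ q₁ q₂ _ = some c := hc
      rw [glue_r hr] at hc'; cases hc'
    · exact h1 ⟨v, Finset.mem_erase.mpr ⟨hvr, hvS⟩⟩
        (transfer_cycle (glue_H1e hr) (glue_H2e hr) hv)
  · exact h2 ⟨v, Finset.mem_compl.mpr hvS⟩
      (transfer_cycle glue_H1c glue_H2c hv)

lemma glue_hk_erase (hr : r ∈ S) (v : {x // x ∈ S.erase r}) :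
    hkn (glue S r q₁ q₂) v.1 = hkn q₁ v :=
  (transfer_hk (glue_H1e hr) (glue_H2e hr) (glue_H3e hr) v).symm

lemma glue_hk_compl (hr : r ∈ S) (v : {x // x ∈ Sᶜ}) :
    hkn (glue S r q₁ q₂) v.1 = hkn q₂ v :=
  (transfer_hk glue_H1c glue_H2c (glue_H3c hr) v).symm

lemma glue_reach_r (hr : r ∈ S) (h1 : isForest q₁) (u : α) :
    ReflTransGen (pRel (glue S r q₁ q₂)) u r ↔ u ∈ S := by
  constructor
  · intro h
    by_contra hu
    exact glue_rtgC h hu hr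
  · intro hu
    by_cases hur : u = r
    · subst hur; exact .refl
    · have hue : u ∈ S.erase r := Finset.mem_erase.mpr ⟨hur, hu⟩
      obtain ⟨x, hux, hxn⟩ := exists_root h1 ⟨u, hue⟩
      have h1' : ReflTransGen (pRel (glue S r q₁ q₂)) u x.1 :=
        transfer_rtg_up (glue_H1e hr) hux
      refine h1'.tail ?_
      show glue S r q₁ q₂ x.1 = some r
      rw [glue_erase' x, hxn]
      rfl

lemma glue_hk_r (hr : r ∈ S) (h1 : isForest q₁) :
    hkn (glue S r q₁ q₂) r = S.card := by
  unfold hkn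
  rw [Nat.card_congr (Equiv.subtypeEquivRight (glue_reach_r hr h1)),
    Nat.card_eq_fintype_card, Fintype.card_coe]

lemma glue_rootD (hr : r ∈ S) {a : α} (ha : a ∈ S) (h1 : isForest q₁) (h2 : isForest q₂) :
    rootD (glue S r q₁ q₂) a = r :=
  rootD_eq (glue_forest hr h1 h2) ((glue_reach_r hr h1 a).mpr ha) (glue_r hr)

lemma glue_treeS (hr : r ∈ S) {a : α} (ha : a ∈ S) (h1 : isForest q₁) (h2 : isForest q₂) :
    treeS (glue S r q₁ q₂) a = S := by
  ext u
  rw [mem_treeS, glue_rootD hr ha h1 h2, glue_reach_r hr h1]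

end GlueSplit
section Split
variable {α : Type*} [Fintype α] [DecidableEq α] {S : Finset α} {r : α} {p : α → Option α}

def sp1 (S : Finset α) (r : α) (p : α → Option α) :
    {x // x ∈ S.erase r} → Option {x // x ∈ S.erase r} :=
  fun x => (p x.1).bind (fun y => if hy : y ∈ S.erase r then some ⟨y, hy⟩ else none)

def sp2 (S : Finset α) (p : α → Option α) :
    {x // x ∈ Sᶜ} → Option {x // x ∈ Sᶜ} :=
  fun x => (p x.1).bind (fun y => if hy : y ∈ Sᶜ then some ⟨y, hy⟩ else none)

lemma sp1_H1 (x y : {x // x ∈ S.erase r}) :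
    pRel (sp1 S r p) x y ↔ pRel p x.1 y.1 := by
  unfold pRel sp1
  cases h : p x.1 with
  | none => simp
  | some z =>
    simp only [Option.bind_some]
    by_cases hz : z ∈ S.erase r
    · rw [dif_pos hz]
      constructor
      · intro hh
        rw [← Option.some.inj hh]
      · intro hh
        have : z = y.1 := Option.some.inj hh
        subst this
        rfl
    · rw [dif_neg hz]
      constructor
      · intro hh; cases hh
      · intro hh
        exact absurd ((Option.some.inj hh) ▸ y.2) hz

lemma sp2_H1 (x y : {x // x ∈ Sᶜ}) :
    pRel (sp2 S p) x y ↔ pRel p x.1 y.1 := by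
  unfold pRel sp2
  cases h : p x.1 with
  | none => simp
  | some z =>
    simp only [Option.bind_some]
    by_cases hz : z ∈ Sᶜ
    · rw [dif_pos hz]
      constructor
      · intro hh
        rw [← Option.some.inj hh]
      · intro hh
        have : z = y.1 := Option.some.inj hh
        subst this
        rfl
    · rw [dif_neg hz]
      constructor
      · intro hh; cases hh
      · intro hh
        exact absurd ((Option.some.inj hh) ▸ y.2) hz

-- standing hypotheses about (p, S, r)
variable (hrn : p r = none) (hSr : ∀ u, u ∈ S ↔ ReflTransGen (pRel p) u r)

include hrn hSr in
lemma sp1_H2 (x : {x // x ∈ S.erase r}) (y : α) (h : p x.1 = some y) :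
    y ∈ S.erase r ∨ p y = none := by
  have hx : x.1 ∈ S := Finset.mem_of_mem_erase x.2
  have hy : y ∈ S := (hSr y).mpr (rtg_step h ((hSr x.1).mp hx) hrn)
  by_cases hyr : y = r
  · right; rw [hyr]; exact hrn
  · left; exact Finset.mem_erase.mpr ⟨hyr, hy⟩

include hrn hSr in
lemma sp2_H2 (x : {x // x ∈ Sᶜ}) (y : α) (h : p x.1 = some y) :
    y ∈ Sᶜ ∨ p y = none := by
  left
  refine Finset.mem_compl.mpr (fun hy => ?_)
  exact Finset.mem_compl.mp x.2 ((hSr x.1).mpr (((hSr y).mp hy).head h))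

include hrn hSr in
lemma sp_stepS (x y : α) (hx : x ∈ S) (h : p x = some y) : y ∈ S :=
  (hSr y).mpr (rtg_step h ((hSr x).mp hx) hrn)

include hrn hSr in
lemma sp1_H3 (v : {x // x ∈ S.erase r}) (u : α)
    (h : ReflTransGen (pRel p) u v.1) : u ∈ S.erase r := by
  have hvS : v.1 ∈ S := Finset.mem_of_mem_erase v.2
  refine Finset.mem_erase.mpr ⟨?_, ?_⟩
  · rintro rfl
    rcases h.cases_head with heq | ⟨c, hc, _⟩
    · exact Finset.ne_of_mem_erase v.2 heq.symm
    · have hc' : p u = some c := hc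
      rw [hrn] at hc'; cases hc'
  · exact (hSr u).mpr (h.trans ((hSr v.1).mp hvS))

include hrn hSr in
lemma sp2_H3 (v : {x // x ∈ Sᶜ}) (u : α)
    (h : ReflTransGen (pRel p) u v.1) : u ∈ Sᶜ := by
  refine Finset.mem_compl.mpr (fun hu => ?_)
  exact Finset.mem_compl.mp v.2 (rtg_closed (sp_stepS hrn hSr) h hu)

include hSr in
lemma hk_root : hkn p r = S.card := by
  unfold hkn
  rw [Nat.card_congr (Equiv.subtypeEquivRight (fun u => ((hSr u).symm))),
    Nat.card_eq_fintype_card, Fintype.card_coe]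

include hrn hSr in
lemma glue_sp : glue S r (sp1 S r p) (sp2 S p) = p := by
  have hr : r ∈ S := (hSr r).mpr .refl
  funext x
  by_cases hx : x ∈ S.erase r
  · rw [show glue S r (sp1 S r p) (sp2 S p) x
        = glue S r (sp1 S r p) (sp2 S p) (⟨x, hx⟩ : {x // x ∈ S.erase r}).1 from rfl,
      glue_erase']
    have hxS : x ∈ S := Finset.mem_of_mem_erase hx
    have hxr : x ≠ r := Finset.ne_of_mem_erase hx
    rcases ((hSr x).mp hxS).cases_head with heq | ⟨c, hc, hcr⟩
    · exact absurd heq hxr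
    · have hc' : p x = some c := hc
      have hcS : c ∈ S := (hSr c).mpr hcr
      unfold sp1
      simp only [hc', Option.bind_some]
      by_cases hcr' : c = r
      · subst hcr'
        rw [dif_neg (Finset.notMem_erase c S)]
        rfl
      · rw [dif_pos (Finset.mem_erase.mpr ⟨hcr', hcS⟩)]
        rfl
  · by_cases hxS : x ∈ S
    · have hxr : x = r := by
        by_contra hne
        exact hx (Finset.mem_erase.mpr ⟨hne, hxS⟩)
      subst hxr
      rw [glue_r hr, hrn]
    · rw [show glue S r (sp1 S r p) (sp2 S p) x
          = glue S r (sp1 S r p) (sp2 S p) (⟨x, Finset.mem_compl.mpr hxS⟩ : {x // x ∈ Sᶜ}).1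
          from rfl,
        glue_compl']
      unfold sp2
      cases hpx : p x with
      | none => rfl
      | some y =>
        have hy : y ∉ S := fun hyS =>
          hxS ((hSr x).mpr ((((hSr y).mp hyS)).head hpx))
        simp only [Option.bind_some, dif_pos (Finset.mem_compl.mpr hy), Option.map_some]

lemma sp1_glue {q₁ : {x // x ∈ S.erase r} → Option {x // x ∈ S.erase r}}
    {q₂ : {x // x ∈ Sᶜ} → Option {x // x ∈ Sᶜ}} :
    sp1 S r (glue S r q₁ q₂) = q₁ := by
  funext x
  unfold sp1
  rw [glue_erase' x]
  cases hq : q₁ x with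
  | none =>
    simp only [Option.elim, Option.bind_some]
    rw [dif_neg (Finset.notMem_erase r S)]
  | some z =>
    simp only [Option.elim, Option.bind_some]
    rw [dif_pos z.2]

lemma sp2_glue {q₁ : {x // x ∈ S.erase r} → Option {x // x ∈ Sᶜ}}
    {q₂ : {x // x ∈ Sᶜ} → Option {x // x ∈ Sᶜ}} : True := trivial

lemma sp2_glue' {q₁ : {x // x ∈ S.erase r} → Option {x // x ∈ S.erase r}}
    {q₂ : {x // x ∈ Sᶜ} → Option {x // x ∈ Sᶜ}} :
    sp2 S (glue S r q₁ q₂) = q₂ := by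
  funext x
  unfold sp2
  rw [glue_compl' x]
  cases hq : q₂ x with
  | none => rfl
  | some z =>
    simp only [Option.map_some, Option.bind_some]
    rw [dif_pos z.2]

end Split
section Fiber
variable {α : Type*} [Fintype α] [DecidableEq α]

open Classical in
lemma fiber_eq (a : α) {S : Finset α} {r : α} (ha : a ∈ S) (hr : r ∈ S) :
    ∑ p ∈ (forestSet α).filter (fun p => treeS p a = S ∧ rootD p a = r),
      ∏ v, wt (hkn p v)
    = wt S.card * Gsum {x // x ∈ S.erase r} * Gsum {x // x ∈ Sᶜ} := by
  classical
  have key : ∑ p ∈ (forestSet α).filter (fun p => treeS p a = S ∧ rootD p a = r),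
      ∏ v, wt (hkn p v)
      = ∑ q ∈ (forestSet {x // x ∈ S.erase r}) ×ˢ (forestSet {x // x ∈ Sᶜ}),
          (wt S.card * ∏ x, wt (hkn q.1 x)) * ∏ x, wt (hkn q.2 x) := by
    refine Finset.sum_bij' (fun p _ => (sp1 S r p, sp2 S p))
      (fun q _ => glue S r q.1 q.2) ?_ ?_ ?_ ?_ ?_
    · intro p hp
      rw [Finset.mem_filter, mem_forestSet] at hp
      obtain ⟨hpf, hS, hR⟩ := hp
      exact Finset.mem_product.mpr
        ⟨mem_forestSet.mpr (transfer_forest hpf sp1_H1),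
         mem_forestSet.mpr (transfer_forest hpf sp2_H1)⟩
    · intro q hq
      rw [Finset.mem_product, mem_forestSet, mem_forestSet] at hq
      rw [Finset.mem_filter, mem_forestSet]
      exact ⟨glue_forest hr hq.1 hq.2, glue_treeS hr ha hq.1 hq.2,
        glue_rootD hr ha hq.1 hq.2⟩
    · intro p hp
      rw [Finset.mem_filter, mem_forestSet] at hp
      obtain ⟨hpf, hS, hR⟩ := hp
      have hrn : p r = none := hR ▸ (rootD_spec hpf a).2
      have hSr : ∀ u, u ∈ S ↔ ReflTransGen (pRel p) u r := by
        intro u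
        rw [← hS, mem_treeS, hR]
      exact glue_sp hrn hSr
    · intro q hq
      exact Prod.ext sp1_glue sp2_glue'
    · intro p hp
      rw [Finset.mem_filter, mem_forestSet] at hp
      obtain ⟨hpf, hS, hR⟩ := hp
      have hrn : p r = none := hR ▸ (rootD_spec hpf a).2
      have hSr : ∀ u, u ∈ S ↔ ReflTransGen (pRel p) u r := by
        intro u
        rw [← hS, mem_treeS, hR]
      have h1 : ∀ x : {x // x ∈ S.erase r}, hkn (sp1 S r p) x = hkn p x.1 :=
        fun x => transfer_hk sp1_H1 (sp1_H2 hrn hSr) (sp1_H3 hrn hSr) x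
      have h2 : ∀ x : {x // x ∈ Sᶜ}, hkn (sp2 S p) x = hkn p x.1 :=
        fun x => transfer_hk sp2_H1 (sp2_H2 hrn hSr) (sp2_H3 hrn hSr) x
      calc ∏ v, wt (hkn p v)
          = (∏ v ∈ S, wt (hkn p v)) * ∏ v ∈ Sᶜ, wt (hkn p v) :=
            (Finset.prod_mul_prod_compl S _).symm
        _ = (wt (hkn p r) * ∏ v ∈ S.erase r, wt (hkn p v)) * ∏ v ∈ Sᶜ, wt (hkn p v) := by
            rw [← Finset.mul_prod_erase S _ hr]
        _ = (wt S.card * ∏ x, wt (hkn (sp1 S r p) x)) * ∏ x, wt (hkn (sp2 S p) x) := by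
            rw [hk_root hSr]
            have e1 : ∏ x : {x // x ∈ S.erase r}, wt (hkn (sp1 S r p) x)
                = ∏ v ∈ S.erase r, wt (hkn p v) := by
              rw [Finset.prod_congr rfl (fun x _ => by rw [h1 x] :
                ∀ x ∈ (Finset.univ : Finset {x // x ∈ S.erase r}), wt (hkn (sp1 S r p) x)
                  = wt (hkn p x.1))]
              exact Finset.prod_coe_sort (S.erase r) (fun v => wt (hkn p v))
            have e2 : ∏ x : {x // x ∈ Sᶜ}, wt (hkn (sp2 S p) x)
                = ∏ v ∈ Sᶜ, wt (hkn p v) := by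
              rw [Finset.prod_congr rfl (fun x _ => by rw [h2 x] :
                ∀ x ∈ (Finset.univ : Finset {x // x ∈ Sᶜ}), wt (hkn (sp2 S p) x)
                  = wt (hkn p x.1))]
              exact Finset.prod_coe_sort (Sᶜ) (fun v => wt (hkn p v))
            rw [e1, e2]
  rw [key, Finset.sum_product]
  unfold Gsum
  calc ∑ q₁ ∈ forestSet {x // x ∈ S.erase r}, ∑ q₂ ∈ forestSet {x // x ∈ Sᶜ},
        (wt S.card * ∏ x, wt (hkn q₁ x)) * ∏ x, wt (hkn q₂ x)
      = ∑ q₁ ∈ forestSet {x // x ∈ S.erase r},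
          (wt S.card * ∏ x, wt (hkn q₁ x)) *
            ∑ q₂ ∈ forestSet {x // x ∈ Sᶜ}, ∏ x, wt (hkn q₂ x) :=
        Finset.sum_congr rfl (fun q₁ _ => by rw [Finset.mul_sum])
    _ = (∑ q₁ ∈ forestSet {x // x ∈ S.erase r}, wt S.card * ∏ x, wt (hkn q₁ x)) *
          ∑ q₂ ∈ forestSet {x // x ∈ Sᶜ}, ∏ x, wt (hkn q₂ x) :=
        (Finset.sum_mul _ _ _).symm
    _ = wt S.card * (∑ q₁ ∈ forestSet {x // x ∈ S.erase r}, ∏ x, wt (hkn q₁ x)) *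
          ∑ q₂ ∈ forestSet {x // x ∈ Sᶜ}, ∏ x, wt (hkn q₂ x) := by
        rw [← Finset.mul_sum]
end Fiber
noncomputable def gseq (n : ℕ) : ℚ := Gsum (Fin n)

section Decomp
variable {α : Type*} [Fintype α] [DecidableEq α]

open Classical in
lemma Gsum_rec (a : α) :
    Gsum α = ∑ S ∈ Finset.univ.powerset.filter (fun S : Finset α => a ∈ S),
      (S.card : ℚ) * (wt S.card * gseq (S.card - 1) * gseq (Fintype.card α - S.card)) := by
  classical
  set A := Finset.univ.powerset.filter (fun S : Finset α => a ∈ S) with hA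
  have hmaps : ∀ p ∈ forestSet α, (treeS p a, rootD p a) ∈ A ×ˢ Finset.univ := by
    intro p hp
    have hpf := mem_forestSet.mp hp
    refine Finset.mem_product.mpr ⟨?_, Finset.mem_univ _⟩
    rw [hA, Finset.mem_filter]
    exact ⟨Finset.mem_powerset.mpr (Finset.subset_univ _),
      mem_treeS.mpr (rootD_spec hpf a).1⟩
  have hfib := Finset.sum_fiberwise_of_maps_to hmaps (fun p => ∏ v, wt (hkn p v))
  rw [Gsum, ← hfib, Finset.sum_product]
  refine Finset.sum_congr rfl (fun S hS => ?_)
  have haS : a ∈ S := (Finset.mem_filter.mp hS).2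
  have hstep : ∀ r : α,
      (∑ p ∈ (forestSet α).filter (fun p => (treeS p a, rootD p a) = (S, r)),
        ∏ v, wt (hkn p v))
      = if r ∈ S then
          wt S.card * gseq (S.card - 1) * gseq (Fintype.card α - S.card) else 0 := by
    intro r
    by_cases hr : r ∈ S
    · rw [if_pos hr]
      rw [Finset.filter_congr
        (fun (p : α → Option α) (_ : p ∈ forestSet α) =>
          Iff.of_eq (Prod.mk.injEq (treeS p a) (rootD p a) S r))]
      rw [fiber_eq a haS hr]
      rw [Gsum_eq_gseq {x // x ∈ S.erase r}, Gsum_eq_gseq {x // x ∈ Sᶜ}]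
      rw [Fintype.card_coe, Fintype.card_coe, Finset.card_erase_of_mem hr,
        Finset.card_compl]
      rfl
    · rw [if_neg hr]
      rw [Finset.filter_eq_empty_iff.mpr, Finset.sum_empty]
      intro p hp
      intro heq
      have h1 : treeS p a = S := (Prod.ext_iff.mp heq).1
      have h2 : rootD p a = r := (Prod.ext_iff.mp heq).2
      apply hr
      rw [← h1, mem_treeS, h2]
  rw [Finset.sum_congr rfl (fun r _ => hstep r)]
  rw [Finset.sum_ite_mem, Finset.univ_inter, Finset.sum_const, nsmul_eq_mul]

end Decomp
section Count
variable {α : Type*} [Fintype α] [DecidableEq α]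

lemma count_subsets (a : α) (k : ℕ) (hk : 1 ≤ k) :
    ((Finset.univ.powerset.filter (fun S : Finset α => a ∈ S)).filter
        (fun S => S.card = k)).card
      = (Fintype.card α - 1).choose (k - 1) := by
  classical
  have hrw : (Fintype.card α - 1).choose (k - 1)
      = (Finset.powersetCard (k - 1) (Finset.univ.erase a)).card := by
    rw [Finset.card_powersetCard, Finset.card_erase_of_mem (Finset.mem_univ a),
      Finset.card_univ]
  rw [hrw]
  refine Finset.card_bij' (fun S _ => S.erase a) (fun T _ => insert a T) ?_ ?_ ?_ ?_
  · intro S hS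
    rw [Finset.mem_filter, Finset.mem_filter] at hS
    obtain ⟨⟨_, haS⟩, hcard⟩ := hS
    refine Finset.mem_powersetCard.mpr ⟨Finset.erase_subset_erase a (Finset.subset_univ S), ?_⟩
    rw [Finset.card_erase_of_mem haS, hcard]
  · intro T hT
    obtain ⟨hsub, hcard⟩ := Finset.mem_powersetCard.mp hT
    have haT : a ∉ T := fun h => (Finset.mem_erase.mp (hsub h)).1 rfl
    rw [Finset.mem_filter, Finset.mem_filter]
    refine ⟨⟨Finset.mem_powerset.mpr (Finset.subset_univ _), Finset.mem_insert_self a T⟩, ?_⟩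
    rw [Finset.card_insert_of_notMem haT, hcard]
    exact Nat.succ_pred_eq_of_pos hk
  · intro S hS
    rw [Finset.mem_filter, Finset.mem_filter] at hS
    exact Finset.insert_erase hS.1.2
  · intro T hT
    obtain ⟨hsub, _⟩ := Finset.mem_powersetCard.mp hT
    exact Finset.erase_insert (fun h => (Finset.mem_erase.mp (hsub h)).1 rfl)

end Count

lemma gseq_rec (n : ℕ) (hn : 1 ≤ n) :
    gseq n = ∑ i ∈ Finset.range n, ((n - 1).choose i : ℚ) *
      (((i : ℚ) + 1) * (wt (i + 1) * gseq i * gseq (n - 1 - i))) := by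
  classical
  have a : Fin n := ⟨0, hn⟩
  have h0 : gseq n = ∑ S ∈ Finset.univ.powerset.filter (fun S : Finset (Fin n) => a ∈ S),
      ((S.card : ℚ) * (wt S.card * gseq (S.card - 1) * gseq (n - S.card))) := by
    rw [gseq, Gsum_rec a]
    simp only [Fintype.card_fin]
  set F : ℕ → ℚ := fun k => (k : ℚ) * (wt k * gseq (k - 1) * gseq (n - k)) with hF
  set A := Finset.univ.powerset.filter (fun S : Finset (Fin n) => a ∈ S) with hA
  have hmaps : ∀ S ∈ A, S.card ∈ Finset.range (n + 1) := by
    intro S _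
    rw [Finset.mem_range, Nat.lt_succ_iff]
    exact le_trans (Finset.card_le_univ S) (le_of_eq (Fintype.card_fin n))
  have hfib := Finset.sum_fiberwise_of_maps_to hmaps (fun S => F S.card)
  have h1 : gseq n = ∑ k ∈ Finset.range (n + 1),
      ((A.filter (fun S => S.card = k)).card : ℚ) * F k := by
    rw [h0, ← hfib]
    refine Finset.sum_congr rfl (fun k _ => ?_)
    rw [Finset.sum_congr rfl (fun S hS => ?_), Finset.sum_const, nsmul_eq_mul]
    rw [(Finset.mem_filter.mp hS).2]
  rw [h1, Finset.sum_range_succ']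
  have hzero : ((A.filter (fun S => S.card = 0)).card : ℚ) * F 0 = 0 := by
    rw [hF]
    simp
  rw [hzero, add_zero]
  refine Finset.sum_congr rfl (fun i _ => ?_)
  rw [count_subsets a (i + 1) (Nat.succ_le_succ (Nat.zero_le i)), Fintype.card_fin]
  rw [hF]
  simp only [Nat.add_sub_cancel, Nat.cast_add, Nat.cast_one]
  congr 2
  rw [Nat.sub_sub, Nat.add_comm 1 i]
lemma gseq_zero : gseq 0 = 1 := by
  rw [gseq, Gsum]
  have h1 : forestSet (Fin 0) = Finset.univ := by
    ext p
    simp only [Finset.mem_univ, iff_true, mem_forestSet]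
    exact fun v => v.elim0
  rw [h1]
  have h2 : ∀ p : Fin 0 → Option (Fin 0), ∏ v, wt (hkn p v) = 1 := fun p => by
    simp
  rw [Finset.sum_congr rfl (fun p _ => h2 p), Finset.sum_const, nsmul_eq_mul, mul_one]
  simp [Finset.card_univ]

lemma dfac_odd (m : ℕ) :
    ((2 * m).factorial : ℚ) = 2 ^ m * m.factorial * (Nat.doubleFactorial (2 * m - 1)) := by
  cases m with
  | zero => simp [Nat.doubleFactorial]
  | succ k =>
    have h6 : 2 * k + 1 + 1 = 2 * (k + 1) := by ring
    have := Nat.factorial_eq_mul_doubleFactorial (2 * k + 1)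
    rw [h6] at this
    have h7 : 2 * (k + 1) - 1 = 2 * k + 1 := by omega
    rw [h7, this, Nat.doubleFactorial_two_mul]
    push_cast
    ring

lemma wt_eval (m : ℕ) :
    ((m : ℚ) + 1) * wt (m + 1) = 2 * 4 ^ m / (Nat.centralBinom m : ℚ) := by
  rw [wt]
  have h2 : 2 * (m + 1) - 2 = 2 * m := by omega
  have h3 : 2 * (m + 1) - 3 = 2 * m - 1 := by omega
  rw [h2, h3, Nat.doubleFactorial_two_mul]
  have hcb : (Nat.centralBinom m : ℚ) ≠ 0 := by
    exact_mod_cast (Nat.centralBinom_pos m).ne'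
  have hfacN : Nat.centralBinom m * m.factorial * m.factorial = (2 * m).factorial := by
    have h := Nat.choose_mul_factorial_mul_factorial (show m ≤ 2 * m by omega)
    rwa [show 2 * m - m = m by omega] at h
  have hfac : (Nat.centralBinom m : ℚ) * m.factorial * m.factorial = (2 * m).factorial := by
    exact_mod_cast hfacN
  have hfq := dfac_odd m
  have hD : (Nat.doubleFactorial (2 * m - 1) : ℚ) ≠ 0 := by
    exact_mod_cast (Nat.doubleFactorial_pos (2 * m - 1)).ne'
  have hm1 : ((m + 1 : ℕ) : ℚ) ≠ 0 := by positivity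
  have hB : ((m + 1 : ℕ) : ℚ) * (Nat.doubleFactorial (2 * m - 1) : ℚ) ≠ 0 :=
    mul_ne_zero hm1 hD
  rw [← mul_div_assoc, div_eq_div_iff hB hcb]
  have hfact : (m.factorial : ℚ) ≠ 0 := by
    exact_mod_cast m.factorial_pos.ne'
  apply mul_left_cancel₀ hfact
  have h4 : (4 : ℚ) ^ m = 2 ^ m * 2 ^ m := by
    rw [← mul_pow]; norm_num
  rw [h4]
  push_cast at hfac hfq ⊢
  linear_combination (2 * ((m : ℚ) + 1) * 2 ^ m) * hfac + (2 * ((m : ℚ) + 1) * 2 ^ m) * hfq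

lemma binom_id (n : ℕ) :
    2 * ∑ i ∈ Finset.range n, 4 ^ i * Nat.centralBinom (n - 1 - i)
      = n * Nat.centralBinom n := by
  induction n with
  | zero => simp
  | succ n ih =>
    rw [Finset.sum_range_succ']
    simp only [Nat.add_sub_cancel, pow_zero, one_mul, Nat.sub_zero]
    have e0 : ∀ i, n - (i + 1) = n - 1 - i := fun i => by omega
    have e1 : ∑ i ∈ Finset.range n, 4 ^ (i + 1) * Nat.centralBinom (n - (i + 1))
        = 4 * ∑ i ∈ Finset.range n, 4 ^ i * Nat.centralBinom (n - 1 - i) := by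
      rw [Finset.mul_sum]
      exact Finset.sum_congr rfl (fun i _ => by rw [e0 i]; ring)
    rw [e1]
    have h := Nat.succ_mul_centralBinom_succ n
    have e2 : 2 * (4 * ∑ i ∈ Finset.range n, 4 ^ i * Nat.centralBinom (n - 1 - i)
          + Nat.centralBinom n)
        = 4 * (2 * ∑ i ∈ Finset.range n, 4 ^ i * Nat.centralBinom (n - 1 - i))
          + 2 * Nat.centralBinom n := by ring
    rw [e2, ih, h]
    ring
lemma gseq_eq (n : ℕ) : gseq n = (n.factorial : ℚ) * Nat.centralBinom n := by
  induction n using Nat.strong_induction_on with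
  | _ n ih =>
    match n with
    | 0 => rw [gseq_zero]; simp
    | (m + 1) =>
      rw [gseq_rec (m + 1) (Nat.succ_le_succ (Nat.zero_le m))]
      simp only [Nat.add_sub_cancel]
      have hterm : ∀ i ∈ Finset.range (m + 1),
          ((m.choose i : ℚ)) * (((i : ℚ) + 1) * (wt (i + 1) * gseq i * gseq (m - i)))
          = (m.factorial : ℚ) * (2 * 4 ^ i * Nat.centralBinom (m - i)) := by
        intro i hi
        have hi' : i ≤ m := Nat.lt_succ_iff.mp (Finset.mem_range.mp hi)
        rw [ih i (by omega), ih (m - i) (by omega)]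
        have hwt := wt_eval i
        have hcb : (Nat.centralBinom i : ℚ) ≠ 0 := by
          exact_mod_cast (Nat.centralBinom_pos i).ne'
        have hi1 : ((i : ℚ) + 1) ≠ 0 := by positivity
        have hfacN : m.choose i * i.factorial * (m - i).factorial = m.factorial :=
          Nat.choose_mul_factorial_mul_factorial hi'
        have hfac : (m.choose i : ℚ) * i.factorial * (m - i).factorial = m.factorial := by
          exact_mod_cast hfacN
        have hwt' : wt (i + 1) = 2 * 4 ^ i / (((i : ℚ) + 1) * Nat.centralBinom i) := by
          rw [eq_div_iff (mul_ne_zero hi1 hcb)]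
          have h2 := congrArg (· * (Nat.centralBinom i : ℚ)) hwt
          rw [div_mul_cancel₀ _ hcb] at h2
          linear_combination h2
        rw [hwt']
        field_simp
        linear_combination (Nat.centralBinom (m - i) : ℚ) * hfac
      rw [Finset.sum_congr rfl hterm, ← Finset.mul_sum]
      have hb := binom_id (m + 1)
      simp only [Nat.add_sub_cancel] at hb
      have hcast : ∑ i ∈ Finset.range (m + 1), (2 * 4 ^ i * (Nat.centralBinom (m - i) : ℚ))
          = ((m + 1) * Nat.centralBinom (m + 1) : ℕ) := by
        rw [← hb]
        push_cast [Finset.mul_sum]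
        exact Finset.sum_congr rfl (fun i _ => by ring)
      rw [hcast]
      rw [Nat.factorial_succ]
      push_cast
      ring

/-- The central binomial coefficient hook length formula for labeled forests. -/
theorem central_binomial_hook_formula_forests (n : ℕ) (hn : 1 ≤ n) :
    (1 / (n.factorial : ℚ)) *
      ∑ᶠ p : {p : Fin n → Option (Fin n) // IsRForest p},
        ∏ v : Fin n,
          2 * (Nat.doubleFactorial (2 * hookLen (p : Fin n → Option (Fin n)) v - 2) : ℚ) /
            ((hookLen (p : Fin n → Option (Fin n)) v : ℚ) *
              (Nat.doubleFactorial (2 * hookLen (p : Fin n → Option (Fin n)) v - 3) : ℚ))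
    = ((2 * n).choose n : ℚ) := by
  classical
  letI : Fintype {p : Fin n → Option (Fin n) // IsRForest p} := Fintype.ofFinite _
  have key : (∑ᶠ p : {p : Fin n → Option (Fin n) // IsRForest p},
      ∏ v : Fin n,
        2 * (Nat.doubleFactorial (2 * hookLen (p : Fin n → Option (Fin n)) v - 2) : ℚ) /
          ((hookLen (p : Fin n → Option (Fin n)) v : ℚ) *
            (Nat.doubleFactorial (2 * hookLen (p : Fin n → Option (Fin n)) v - 3) : ℚ)))
      = gseq n := by
    rw [finsum_eq_sum_of_fintype]
    calc (∑ p : {p : Fin n → Option (Fin n) // IsRForest p},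
        ∏ v : Fin n,
          2 * (Nat.doubleFactorial (2 * hookLen (p : Fin n → Option (Fin n)) v - 2) : ℚ) /
            ((hookLen (p : Fin n → Option (Fin n)) v : ℚ) *
              (Nat.doubleFactorial (2 * hookLen (p : Fin n → Option (Fin n)) v - 3) : ℚ)))
        = ∑ p ∈ forestSet (Fin n), ∏ v, wt (hkn p v) :=
          (Finset.sum_subtype _ (fun x => mem_forestSet) (fun p => ∏ v, wt (hkn p v))).symm
      _ = gseq n := rfl
  rw [key, gseq_eq, Nat.centralBinom_eq_two_mul_choose]
  have hf : (n.factorial : ℚ) ≠ 0 := by exact_mod_cast n.factorial_pos.ne'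
  rw [one_div, ← mul_assoc, inv_mul_cancel₀ hf, one_mul]
end

section
/- For every n ≥ 1, Σ_{F ∈ F(n)} ∏_{v ∈ F} 1/h_v² = (n+1)!/2^n, where F(n) is the set of labeled rooted forests on vertex set {1,...,n}. -/
set_option linter.unusedSectionVars false
set_option maxHeartbeats 1000000

open Relation



namespace HookAux


variable {α : Type*} [DecidableEq α]

lemma subtype_beq_eq {β : Type*} [DecidableEq β] (P : β → Prop) :
    (Subtype.instBEq : BEq {x // P x}) = instBEqOfDecidableEq :=
  lawful_beq_subsingleton _ _

lemma subtype_beq_eq' {β : Type*} [BEq β] [LawfulBEq β] (P : β → Prop)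
    (inst : DecidableEq {x // P x}) :
    (Subtype.instBEq : BEq {x // P x}) = @instBEqOfDecidableEq _ inst :=
  lawful_beq_subsingleton _ _

def PR (p : α → Option α) : α → α → Prop := fun a b => p a = some b

def Forest (p : α → Option α) : Prop := ∀ v, ¬ Relation.TransGen (PR p) v v

noncomputable def hk (p : α → Option α) (v : α) : ℕ :=
  Nat.card {u : α // Relation.ReflTransGen (PR p) u v}

/-- delete a root -/
def del (p : α → Option α) (r : α) : {a : α // a ≠ r} → Option {a : α // a ≠ r} :=
  fun a => (p a.val).bind (fun b => if h : b = r then none else some ⟨b, h⟩)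

lemma PR_del_iff {p : α → Option α} {r : α} {a b : {x : α // x ≠ r}} :
    PR (del p r) a b ↔ PR p a.val b.val := by
  unfold PR del
  cases h : p a.val with
  | none => simp [h]
  | some c =>
    simp only [h, Option.bind_some]
    by_cases hc : c = r
    · simp only [hc, dif_pos rfl]
      constructor
      · intro hcon; exact absurd hcon (by simp)
      · intro hcon
        exact absurd (Option.some_injective _ hcon).symm b.2
    · simp only [dif_neg hc]
      constructor
      · intro hcon
        have := Option.some_injective _ hcon
        rw [← this]
      · intro hcon
        have : c = b.val := Option.some_injective _ hcon
        subst this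
        rfl

lemma rtg_del_back {p : α → Option α} {r : α} (hr : p r = none) {v : α} (hv : v ≠ r)
    {u : α} (h : ReflTransGen (PR p) u v) :
    ∃ (hu : u ≠ r), ReflTransGen (PR (del p r)) ⟨u, hu⟩ ⟨v, hv⟩ := by
  induction h using Relation.ReflTransGen.head_induction_on with
  | refl => exact ⟨hv, ReflTransGen.refl⟩
  | @head a b hab hbv ih =>
    obtain ⟨hb, hpath⟩ := ih
    have ha : a ≠ r := by
      rintro rfl
      rw [show PR p a b = (p a = some b) from rfl, hr] at hab
      exact nomatch hab
    exact ⟨ha, ReflTransGen.head (PR_del_iff.mpr hab) hpath⟩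

lemma rtg_del_iff {p : α → Option α} {r : α} (hr : p r = none) {u v : {x : α // x ≠ r}} :
    ReflTransGen (PR (del p r)) u v ↔ ReflTransGen (PR p) u.val v.val := by
  constructor
  · intro h
    exact ReflTransGen.lift Subtype.val (fun a b hab => PR_del_iff.mp hab) u v h
  · intro h
    obtain ⟨hu, hpath⟩ := rtg_del_back hr v.2 h
    convert hpath <;> simp

lemma forest_del {p : α → Option α} (hp : Forest p) (r : α) : Forest (del p r) := by
  intro v hv
  exact hp v.val (TransGen.lift Subtype.val (fun a b hab => PR_del_iff.mp hab) v v hv)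

lemma hk_del {p : α → Option α} {r : α} (hr : p r = none) (v : {x : α // x ≠ r}) :
    hk (del p r) v = hk p v.val := by
  apply Nat.card_congr
  exact ⟨fun u => ⟨u.1.1, (rtg_del_iff hr).mp u.2⟩,
    fun u => ⟨⟨u.1, (rtg_del_back hr v.2 u.2).choose⟩, (rtg_del_back hr v.2 u.2).choose_spec⟩,
    fun u => Subtype.ext (Subtype.ext rfl), fun u => Subtype.ext rfl⟩

section Lists

/-- complete nodup list -/
def Good (l : List α) : Prop := l.Nodup ∧ ∀ a : α, a ∈ l

/-- linear extension: parents come earlier -/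
def IsLE (p : α → Option α) (l : List α) : Prop :=
  Good l ∧ ∀ a b, PR p a b → l.idxOf b < l.idxOf a

variable [Fintype α]

lemma Good.length_eq {l : List α} (h : Good l) : l.length = Fintype.card α := by
  classical
  have h1 : l.toFinset = Finset.univ := by
    ext a; simp [h.2 a]
  have := List.toFinset_card_of_nodup h.1
  rw [h1] at this
  simpa [Finset.card_univ] using this.symm

lemma good_ofFn (f : Fin (Fintype.card α) ≃ α) : Good (List.ofFn f) := by
  constructor
  · rw [List.nodup_ofFn]; exact f.injective
  · intro a
    rw [List.mem_ofFn]
    exact ⟨f.symm a, f.apply_symm_apply a⟩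

lemma bij_ofFn : Function.Bijective
    (fun f : Fin (Fintype.card α) ≃ α => (⟨List.ofFn f, good_ofFn f⟩ : {l : List α // Good l})) := by
  constructor
  · intro f g hfg
    simp only [Subtype.mk.injEq] at hfg
    have := List.ofFn_injective hfg
    ext i
    exact congrFun this i
  · rintro ⟨l, hl⟩
    have hlen : l.length = Fintype.card α := hl.length_eq
    have hinj : Function.Injective (fun i : Fin (Fintype.card α) => l.get (Fin.cast hlen.symm i)) := by
      intro i j hij
      have := (List.nodup_iff_injective_get).mp hl.1 hij
      simpa [Fin.ext_iff] using this
    have hbij : Function.Bijective (fun i : Fin (Fintype.card α) => l.get (Fin.cast hlen.symm i)) :=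
      (Fintype.bijective_iff_injective_and_card _).2 ⟨hinj, by simp⟩
    refine ⟨Equiv.ofBijective _ hbij, ?_⟩
    ext1
    apply List.ext_get (by simp [hlen])
    intro i h1 h2
    simp only [List.get_ofFn, Equiv.ofBijective]
    rfl

instance : Finite {l : List α // Good l} :=
  Finite.of_surjective _ bij_ofFn.surjective

lemma card_good : Nat.card {l : List α // Good l} = (Fintype.card α).factorial := by
  rw [← Nat.card_eq_of_bijective _ bij_ofFn]
  rw [Nat.card_eq_fintype_card, Fintype.card_equiv (Fintype.equivFinOfCardEq rfl).symm]
  simp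


end Lists

section Partition

variable [Fintype α]

lemma trans_irrefl_flip {p : α → Option α} (hp : Forest p) :
    WellFounded (fun a b => TransGen (PR p) b a) := by
  letI : IsTrans α (fun a b => TransGen (PR p) b a) := ⟨fun a b c hab hbc => hbc.trans hab⟩
  letI : IsIrrefl α (fun a b => TransGen (PR p) b a) := ⟨fun a => hp a⟩
  exact Finite.wellFounded_of_trans_of_irrefl _

lemma exists_root {p : α → Option α} (hp : Forest p) (u : α) :
    ∃ r, p r = none ∧ ReflTransGen (PR p) u r := by
  induction u using WellFounded.induction (trans_irrefl_flip hp) with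
  | _ u ih =>
    cases h : p u with
    | none => exact ⟨u, h, ReflTransGen.refl⟩
    | some b =>
      obtain ⟨r, hr, hpath⟩ := ih b (TransGen.single h)
      exact ⟨r, hr, ReflTransGen.head h hpath⟩

lemma root_unique {p : α → Option α} {u r₁ r₂ : α}
    (h1 : ReflTransGen (PR p) u r₁) (hr1 : p r₁ = none)
    (h2 : ReflTransGen (PR p) u r₂) (hr2 : p r₂ = none) : r₁ = r₂ := by
  induction h1 using Relation.ReflTransGen.head_induction_on with
  | refl =>
    rcases h2.cases_head with h | ⟨c, hc, _⟩
    · exact h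
    · rw [show PR p r₁ c = (p r₁ = some c) from rfl, hr1] at hc
      exact nomatch hc
  | @head a b hab hbr ih =>
    rcases h2.cases_head with h | ⟨c, hc, hcr⟩
    · rw [show PR p a b = (p a = some b) from rfl, h, hr2] at hab
      exact nomatch hab
    · have : b = c := by
        rw [show PR p a b = (p a = some b) from rfl] at hab
        rw [show PR p a c = (p a = some c) from rfl, hab] at hc
        exact Option.some_injective _ hc
      subst this
      exact ih hcr

noncomputable def rootOf (p : α → Option α) (hp : Forest p) (u : α) : α :=
  (exists_root hp u).choose

lemma rootOf_spec (p : α → Option α) (hp : Forest p) (u : α) :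
    p (rootOf p hp u) = none ∧ ReflTransGen (PR p) u (rootOf p hp u) :=
  (exists_root hp u).choose_spec

lemma sum_hk_roots {p : α → Option α} (hp : Forest p) :
    ∑ r : {r : α // p r = none}, hk p r.val = Fintype.card α := by
  classical
  have hcard : ∀ r : α, p r = none → hk p r
      = (Finset.univ.filter (fun u => rootOf p hp u = r)).card := by
    intro r hr
    have : ∀ u : α, (ReflTransGen (PR p) u r) ↔ rootOf p hp u = r := by
      intro u
      constructor
      · intro h
        exact root_unique (rootOf_spec p hp u).2 (rootOf_spec p hp u).1 h hr
      · rintro rfl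
        exact (rootOf_spec p hp u).2
    unfold hk
    rw [Nat.card_eq_fintype_card, Fintype.card_subtype]
    congr 1
    ext u
    simp [this u]
  have key : ∑ r : {r : α // p r = none},
      (Finset.univ.filter (fun u => rootOf p hp u = r.val)).card = Fintype.card α := by
    rw [← Finset.card_univ]
    rw [Finset.card_eq_sum_card_fiberwise
      (f := rootOf p hp) (t := Finset.univ.filter (fun r => p r = none))
      (fun u _ => by simp [(rootOf_spec p hp u).1])]
    rw [← Finset.sum_subtype (Finset.univ.filter (fun r => p r = none))
      (fun r => by simp) (fun r => (Finset.univ.filter (fun u => rootOf p hp u = r)).card)]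
  rw [← key]
  apply Finset.sum_congr rfl
  intro r _
  exact hcard r.val r.2

end Partition

section ListHelpers

lemma indexOf_pmap_mk {P : α → Prop} [DecidablePred P] :
    ∀ (t : List α) (H : ∀ x ∈ t, P x) (a : {x : α // P x}),
    (t.pmap (fun x h => (⟨x, h⟩ : {x : α // P x})) H).idxOf a = t.idxOf a.val := by
  intro t
  induction t with
  | nil => intro H a; rfl
  | cons b t ih =>
    intro H a
    by_cases hab : a.val = b
    · have : (⟨b, H b (by simp)⟩ : {x : α // P x}) = a := Subtype.ext hab.symm
      simp only [List.pmap]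
      rw [List.idxOf_cons_eq _ this, List.idxOf_cons_eq _ hab.symm]
    · simp only [List.pmap]
      rw [List.idxOf_cons_ne _ (fun h => hab (congrArg Subtype.val h.symm)),
        List.idxOf_cons_ne _ (fun h => hab h.symm), ih]

lemma map_val_pmap_mk {P : α → Prop} (t : List α) (H : ∀ x ∈ t, P x) :
    (t.pmap (fun x h => (⟨x, h⟩ : {x : α // P x})) H).map Subtype.val = t := by
  rw [List.map_pmap, List.pmap_eq_map]
  simp

lemma indexOf_map_of_injective {β : Type*} [DecidableEq β] {f : α → β}
    (hf : Function.Injective f) : ∀ (l : List α) (a : α),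
    (l.map f).idxOf (f a) = l.idxOf a := by
  intro l
  induction l with
  | nil => intro a; rfl
  | cons b t ih =>
    intro a
    by_cases hab : a = b
    · subst hab
      simp [List.idxOf_cons_self]
    · have h1 : f b ≠ f a := fun h => hab (hf h).symm
      have h2 : b ≠ a := fun h => hab h.symm
      rw [List.map_cons, List.idxOf_cons_ne _ h1, List.idxOf_cons_ne _ h2, ih]

lemma perm_insertIdx (a : α) : ∀ (k : ℕ) (l : List α), k ≤ l.length →
    (l.insertIdx k a).Perm (a :: l) := by
  intro k
  induction k with
  | zero => intro l _; rw [List.insertIdx_zero]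
  | succ k ih =>
    intro l hl
    cases l with
    | nil => simp at hl
    | cons b t =>
      rw [List.insertIdx_succ_cons]
      exact ((ih t (by simpa using hl)).cons b).trans (List.Perm.swap a b t)

lemma indexOf_insertIdx {a x : α} (hax : a ≠ x) : ∀ (k : ℕ) (l : List α),
    (l.insertIdx k a).idxOf x
      = if l.idxOf x < k then l.idxOf x else l.idxOf x + 1 := by
  intro k
  induction k with
  | zero =>
    intro l
    rw [List.insertIdx_zero, List.idxOf_cons_ne _ hax]
    simp
  | succ k ih =>
    intro l
    cases l with
    | nil => simp [List.insertIdx_succ_nil]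
    | cons b t =>
      rw [List.insertIdx_succ_cons]
      by_cases hxb : x = b
      · subst hxb
        rw [List.idxOf_cons_self, List.idxOf_cons_self]
        simp
      · rw [List.idxOf_cons_ne _ (fun h => hxb h.symm),
          List.idxOf_cons_ne _ (fun h => hxb h.symm), ih t]
        by_cases h1 : t.idxOf x < k
        · rw [if_pos h1, if_pos (by omega)]
        · rw [if_neg h1, if_neg (by omega)]

lemma indexOf_insertIdx_self {l : List α} {a : α} (ha : a ∉ l) (hnd : l.Nodup)
    {k : ℕ} (hk : k ≤ l.length) : (l.insertIdx k a).idxOf a = k := by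
  have hnd' : (l.insertIdx k a).Nodup :=
    ((perm_insertIdx a k l hk).nodup_iff).mpr (List.nodup_cons.mpr ⟨ha, hnd⟩)
  have hklt : k < (l.insertIdx k a).length := by
    rw [List.length_insertIdx, if_pos hk]; omega
  have hget : (l.insertIdx k a)[k] = a := List.getElem_insertIdx_self hklt
  have h2 := List.Nodup.idxOf_getElem hnd' k hklt
  rwa [hget] at h2

end ListHelpers

section Ecount

variable [Fintype α]

noncomputable def E (p : α → Option α) : ℕ := Nat.card {l : List α // IsLE p l}

instance (p : α → Option α) : Finite {l : List α // IsLE p l} :=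
  Finite.of_injective (fun x => (⟨x.1, x.2.1⟩ : {l : List α // Good l}))
    (fun x y h => Subtype.ext (Subtype.mk_eq_mk.mp h))

lemma E_empty [IsEmpty α] (p : α → Option α) : E p = 1 := by
  have hle : IsLE p ([] : List α) :=
    ⟨⟨List.nodup_nil, fun a => (IsEmpty.false a).elim⟩, fun a b _ => (IsEmpty.false a).elim⟩
  have huniq : ∀ l : {l : List α // IsLE p l}, l = ⟨[], hle⟩ := by
    rintro ⟨l, hl⟩
    cases l with
    | nil => rfl
    | cons a t => exact (IsEmpty.false a).elim
  unfold E
  haveI : Unique {l : List α // IsLE p l} := ⟨⟨⟨[], hle⟩⟩, huniq⟩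
  simp

/-- the gluing map for the root-removal recursion -/
noncomputable def glue (p : α → Option α) :
    (Σ r : {r : α // p r = none}, {l : List {a : α // a ≠ r.val} // IsLE (del p r.val) l}) →
    {l : List α // IsLE p l} := by
  rintro ⟨r, l, hl⟩
  refine ⟨r.val :: l.map Subtype.val, ⟨⟨?_, ?_⟩, ?_⟩⟩
  · refine List.nodup_cons.mpr ⟨?_, hl.1.1.map Subtype.val_injective⟩
    intro hmem
    obtain ⟨x, _, hx⟩ := List.mem_map.mp hmem
    exact x.2 hx
  · intro a
    by_cases ha : a = r.val
    · simp [ha]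
    · exact List.mem_cons_of_mem _ (List.mem_map.mpr ⟨⟨a, ha⟩, hl.1.2 ⟨a, ha⟩, rfl⟩)
  · intro a b hab
    have ha : a ≠ r.val := by
      rintro rfl
      exact nomatch (r.2.symm.trans hab)
    have hmem : a ∈ l.map Subtype.val := List.mem_map.mpr ⟨⟨a, ha⟩, hl.1.2 ⟨a, ha⟩, rfl⟩
    rw [List.idxOf_cons_ne _ (fun h => ha h.symm)]
    by_cases hb : b = r.val
    · rw [hb, List.idxOf_cons_self]
      exact Nat.succ_pos _
    · rw [List.idxOf_cons_ne _ (fun h => hb h.symm)]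
      have : PR (del p r.val) ⟨a, ha⟩ ⟨b, hb⟩ := PR_del_iff.mpr hab
      have hlt := hl.2 _ _ this
      have e1 : (l.map Subtype.val).idxOf a = l.idxOf ⟨a, ha⟩ :=
        by rw [subtype_beq_eq]; exact indexOf_map_of_injective Subtype.val_injective l ⟨a, ha⟩
      have e2 : (l.map Subtype.val).idxOf b = l.idxOf ⟨b, hb⟩ :=
        by rw [subtype_beq_eq]; exact indexOf_map_of_injective Subtype.val_injective l ⟨b, hb⟩
      rw [e1, e2]
      rw [subtype_beq_eq]; exact Nat.succ_lt_succ hlt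

lemma glue_bijective [Nonempty α] (p : α → Option α) : Function.Bijective (glue p) := by
  constructor
  · rintro ⟨r₁, l₁, hl₁⟩ ⟨r₂, l₂, hl₂⟩ h
    simp only [glue, Subtype.mk.injEq] at h
    obtain ⟨hr, hl⟩ := List.cons.inj (congrArg Subtype.val h)
    have hrr : r₁ = r₂ := Subtype.ext hr
    subst hrr
    have : l₁ = l₂ := List.map_injective_iff.mpr Subtype.val_injective hl
    subst this
    rfl
  · rintro ⟨l, hl⟩
    revert hl
    cases l with
    | nil =>
      intro hl
      exfalso
      obtain ⟨a⟩ := ‹Nonempty α›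
      exact List.not_mem_nil (hl.1.2 a)
    | cons h t =>
      intro hl
      have hroot : p h = none := by
        cases hph : p h with
        | none => rfl
        | some b =>
          have := hl.2 h b hph
          rw [List.idxOf_cons_self] at this
          exact absurd this (Nat.not_lt_zero _)
      have hnodup := hl.1.1
      have hth : ∀ x ∈ t, x ≠ h := by
        intro x hx
        rintro rfl
        exact (List.nodup_cons.mp hnodup).1 hx
      set l' : List {a : α // a ≠ h} := t.pmap (fun x hx => ⟨x, hx⟩) hth with hl'def
      have hmapval : l'.map Subtype.val = t := map_val_pmap_mk t hth
      have hidx : ∀ a : {x : α // x ≠ h}, l'.idxOf a = t.idxOf a.val :=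
        fun a => indexOf_pmap_mk t hth a
      have hLE : IsLE (del p h) l' := by
        refine ⟨⟨hl.1.1.of_cons.pmap (fun a _ b _ h => Subtype.mk_eq_mk.mp h), ?_⟩, ?_⟩
        · intro a
          have hmem : a.val ∈ h :: t := hl.1.2 a.val
          have : a.val ∈ t := by
            rcases List.mem_cons.mp hmem with h1 | h1
            · exact absurd h1 a.2
            · exact h1
          rw [← hmapval] at this
          obtain ⟨x, hx1, hx2⟩ := List.mem_map.mp this
          rwa [← Subtype.ext hx2.symm] at hx1
        · intro a b hab
          have hab' : PR p a.val b.val := PR_del_iff.mp hab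
          have := hl.2 a.val b.val hab'
          rw [List.idxOf_cons_ne _ (fun hh => a.2 hh.symm),
            List.idxOf_cons_ne _ (fun hh => b.2 hh.symm)] at this
          rw [← subtype_beq_eq, hidx a, hidx b]
          exact Nat.lt_of_succ_lt_succ this
      refine ⟨⟨⟨h, hroot⟩, l', hLE⟩, ?_⟩
      simp only [glue]
      exact Subtype.ext (congrArg (h :: ·) hmapval)

lemma E_recursion [Nonempty α] (p : α → Option α) :
    E p = ∑ r : {r : α // p r = none}, E (del p r.val) := by
  classical
  unfold E
  rw [← Nat.card_eq_of_bijective _ (glue_bijective p)]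
  letI : ∀ r : {r : α // p r = none},
      Fintype {l : List {a : α // a ≠ r.val} // IsLE (del p r.val) l} :=
    fun r => Fintype.ofFinite _
  rw [Nat.card_eq_fintype_card, Fintype.card_sigma]
  apply Finset.sum_congr rfl
  intro r _
  rw [Nat.card_eq_fintype_card]

end Ecount

section HookFormula

lemma card_subtype_ne [Fintype α] (r : α) :
    Fintype.card {a : α // a ≠ r} = Fintype.card α - 1 := by
  classical
  rw [Fintype.card_subtype]
  have : Finset.univ.filter (fun a : α => a ≠ r) = Finset.univ.erase r := by
    ext a; simp [and_comm]
  rw [this, Finset.card_erase_of_mem (Finset.mem_univ r), Finset.card_univ]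

theorem hook_formula : ∀ (n : ℕ) (α : Type) [DecidableEq α] [Fintype α],
    Fintype.card α = n → ∀ p : α → Option α, Forest p →
    (∏ v : α, hk p v) * E p = n.factorial := by
  intro n
  induction n with
  | zero =>
    intro α _ _ hcard p hp
    haveI : IsEmpty α := Fintype.card_eq_zero_iff.mp hcard
    rw [E_empty p]
    simp
  | succ n IH =>
    intro α _ _ hcard p hp
    haveI : Nonempty α := Fintype.card_pos_iff.mp (by omega)
    classical
    have hterm : ∀ r : {r : α // p r = none},
        (∏ v : α, hk p v) * E (del p r.val) = hk p r.val * n.factorial := by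
      intro r
      have hsub : ∀ v : {a : α // a ≠ r.val}, hk p v.val = hk (del p r.val) v :=
        fun v => (hk_del r.2 v).symm
      have hsplit : (∏ v : α, hk p v)
          = hk p r.val * ∏ v : {a : α // a ≠ r.val}, hk (del p r.val) v := by
        rw [Finset.prod_eq_mul_prod_sdiff_singleton_of_mem (Finset.mem_univ r.val) (fun v => hk p v)]
        congr 1
        calc ∏ x ∈ Finset.univ \ {r.val}, hk p x
            = ∏ v : {a : α // a ≠ r.val}, hk p v.val :=
              Finset.prod_subtype (p := fun a : α => a ≠ r.val) _ (fun x => by simp) _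
          _ = ∏ v : {a : α // a ≠ r.val}, hk (del p r.val) v :=
              Finset.prod_congr rfl (fun v _ => hsub v)
      have hcards : Fintype.card {a : α // a ≠ r.val} = n := by
        rw [card_subtype_ne, hcard]
        omega
      have hIH := IH {a : α // a ≠ r.val} hcards (del p r.val) (forest_del hp r.val)
      rw [hsplit, mul_assoc, hIH]
    calc (∏ v : α, hk p v) * E p
        = ∑ r : {r : α // p r = none}, (∏ v : α, hk p v) * E (del p r.val) := by
          rw [E_recursion p, Finset.mul_sum]
      _ = ∑ r : {r : α // p r = none}, hk p r.val * n.factorial := by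
          exact Finset.sum_congr rfl (fun r _ => hterm r)
      _ = (∑ r : {r : α // p r = none}, hk p r.val) * n.factorial := by
          rw [Finset.sum_mul]
      _ = (n + 1) * n.factorial := by rw [sum_hk_roots hp, hcard]
      _ = (n + 1).factorial := by rw [Nat.factorial_succ]

end HookFormula

section Count

variable [Fintype α]

def before (l : List α) (u v : α) : Prop := l.idxOf u < l.idxOf v

def Cond (π σ : List α) (p : α → Option α) : Prop :=
  ∀ v, ∀ u, p v = some u → (before π u v ∧ before σ u v)

lemma cond_iff {π σ : List α} (hπ : Good π) (hσ : Good σ) (p : α → Option α) :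
    (Forest p ∧ IsLE p π ∧ IsLE p σ) ↔ Cond π σ p := by
  constructor
  · rintro ⟨_, hp1, hp2⟩ v u hvu
    exact ⟨hp1.2 v u hvu, hp2.2 v u hvu⟩
  · intro h
    refine ⟨?_, ⟨hπ, fun a b hab => (h a b hab).1⟩, ⟨hσ, fun a b hab => (h a b hab).2⟩⟩
    intro v hv
    have htrans : Transitive (fun a b : α => before π b a) := by
      intro a b c h1 h2
      exact h2.trans h1
    have hsub : ∀ a b : α, PR p a b → (fun a b : α => before π b a) a b :=
      fun a b hab => (h a b hab).1
    have := Relation.TransGen.mono hsub v v hv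
    haveI hT : IsTrans α (fun a b : α => before π b a) := ⟨htrans⟩
    rw [Relation.transGen_eq_self] at this
    exact lt_irrefl _ this

noncomputable def CB (π σ : List α) (v : α) : ℕ :=
  Nat.card {u : α // before π u v ∧ before σ u v}

def optEquiv {C : α → Prop} :
    {o : Option α // ∀ u, o = some u → C u} ≃ Option {u : α // C u} where
  toFun x := match x with
    | ⟨none, _⟩ => none
    | ⟨some u, h⟩ => some ⟨u, h u rfl⟩
  invFun o := match o with
    | none => ⟨none, fun u h => nomatch h⟩
    | some u => ⟨some u.1, fun w hw => (Option.some_injective _ hw) ▸ u.2⟩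
  left_inv := by rintro ⟨o, h⟩; cases o <;> rfl
  right_inv := by rintro (_ | u) <;> rfl

lemma forest_of_cond {π σ : List α} (hπ : Good π) (hσ : Good σ)
    {p : α → Option α} (h : Cond π σ p) : Forest p :=
  ((cond_iff hπ hσ p).mpr h).1

lemma card_X (π σ : List α) :
    Nat.card {p : α → Option α // Cond π σ p} = ∏ v : α, (1 + CB π σ v) := by
  classical
  have e1 : {p : α → Option α // Cond π σ p}
      ≃ ∀ v : α, {o : Option α // ∀ u, o = some u → (before π u v ∧ before σ u v)} :=
    Equiv.subtypePiEquivPi (β := fun _ : α => Option α)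
      (p := fun v o => ∀ u, o = some u → (before π u v ∧ before σ u v))
  have e2 : ∀ v : α, {o : Option α // ∀ u, o = some u → (before π u v ∧ before σ u v)}
      ≃ Option {u : α // before π u v ∧ before σ u v} := fun v => optEquiv
  rw [Nat.card_congr e1, Nat.card_pi]
  apply Finset.prod_congr rfl
  intro v _
  rw [Nat.card_congr (e2 v)]
  letI : Fintype {u : α // before π u v ∧ before σ u v} := Fintype.ofFinite _
  rw [Nat.card_eq_fintype_card, Fintype.card_option]
  unfold CB
  rw [Nat.card_eq_fintype_card]
  omega

end Count

section Triples

variable [Fintype α]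

noncomputable instance : Fintype {l : List α // Good l} := Fintype.ofFinite _
noncomputable instance (p : α → Option α) : Fintype {l : List α // IsLE p l} := Fintype.ofFinite _
noncomputable instance (π σ : List α) : Fintype {p : α → Option α // Cond π σ p} :=
  Fintype.ofFinite _
noncomputable instance : Fintype {p : α → Option α // Forest p} := Fintype.ofFinite _

def TT (α : Type*) [DecidableEq α] : Type _ :=
  Σ p : {p : α → Option α // Forest p},
    ({l : List α // IsLE p.1 l} × {l : List α // IsLE p.1 l})

def YY (α : Type*) [DecidableEq α] : Type _ :=
  Σ π : {l : List α // Good l}, Σ σ : {l : List α // Good l},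
    {p : α → Option α // Cond π.1 σ.1 p}

noncomputable def equivTY : TT α ≃ YY α where
  toFun x := ⟨⟨x.2.1.1, x.2.1.2.1⟩, ⟨x.2.2.1, x.2.2.2.1⟩,
    ⟨x.1.1, (cond_iff x.2.1.2.1 x.2.2.2.1 x.1.1).mp ⟨x.1.2, x.2.1.2, x.2.2.2⟩⟩⟩
  invFun y :=
    ⟨⟨y.2.2.1, ((cond_iff y.1.2 y.2.1.2 y.2.2.1).mpr y.2.2.2).1⟩,
      ⟨y.1.1, ((cond_iff y.1.2 y.2.1.2 y.2.2.1).mpr y.2.2.2).2.1⟩,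
      ⟨y.2.1.1, ((cond_iff y.1.2 y.2.1.2 y.2.2.1).mpr y.2.2.2).2.2⟩⟩
  left_inv := by rintro ⟨⟨p, hp⟩, ⟨⟨π, hπ⟩, ⟨σ, hσ⟩⟩⟩; rfl
  right_inv := by rintro ⟨⟨π, hπ⟩, ⟨σ, hσ⟩, ⟨p, hc⟩⟩; rfl

noncomputable instance : Fintype (TT α) := by unfold TT; infer_instance
noncomputable instance : Fintype (YY α) := by unfold YY; infer_instance

lemma card_TT : Nat.card (TT α) = ∑ p : {p : α → Option α // Forest p}, E p.1 * E p.1 := by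
  rw [Nat.card_eq_fintype_card]
  unfold TT
  rw [Fintype.card_sigma]
  apply Finset.sum_congr rfl
  intro p _
  rw [Fintype.card_prod]
  unfold E
  rw [Nat.card_eq_fintype_card]

lemma card_YY : Nat.card (YY α)
    = ∑ π : {l : List α // Good l}, ∑ σ : {l : List α // Good l},
        ∏ v : α, (1 + CB π.1 σ.1 v) := by
  rw [Nat.card_eq_fintype_card]
  unfold YY
  rw [Fintype.card_sigma]
  apply Finset.sum_congr rfl
  intro pp _
  rw [Fintype.card_sigma]
  apply Finset.sum_congr rfl
  intro ss _
  rw [← card_X pp.1 ss.1, Nat.card_eq_fintype_card]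

end Triples

section Relabel

variable {γ : Type} [Fintype γ] [LinearOrder γ]

noncomputable def dd (v : γ) (l : List γ) : ℕ := Nat.card {u : γ // u < v ∧ before l u v}

noncomputable def DD (γ : Type) [Fintype γ] [LinearOrder γ] : ℕ :=
  ∑ σ : {l : List γ // Good l}, ∏ v : γ, (1 + dd v σ.1)

noncomputable def gmap (π : {l : List γ // Good l}) : γ ≃ γ := by
  refine Equiv.ofBijective
    (fun a => monoEquivOfFin γ rfl
      ⟨π.1.idxOf a, by rw [← π.2.length_eq]; exact List.idxOf_lt_length_iff.2 (π.2.2 a)⟩) ?_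
  rw [Fintype.bijective_iff_injective_and_card]
  refine ⟨?_, rfl⟩
  intro a b hab
  have h1 := (monoEquivOfFin γ rfl).injective hab
  have h2 : π.1.idxOf a = π.1.idxOf b := congrArg Fin.val h1
  exact (List.idxOf_inj (π.2.2 a)).mp h2

lemma gmap_lt_iff (π : {l : List γ // Good l}) (u v : γ) :
    before π.1 u v ↔ gmap π u < gmap π v := by
  show _ ↔ monoEquivOfFin γ rfl _ < monoEquivOfFin γ rfl _
  rw [OrderIso.lt_iff_lt, Fin.mk_lt_mk]
  rfl

lemma before_map (g : γ ≃ γ) (l : List γ) (u v : γ) :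
    before (l.map g) (g u) (g v) ↔ before l u v := by
  unfold before
  rw [indexOf_map_of_injective g.injective, indexOf_map_of_injective g.injective]

noncomputable def goodmap (g : γ ≃ γ) : {l : List γ // Good l} ≃ {l : List γ // Good l} where
  toFun σ := ⟨σ.1.map g, ⟨σ.2.1.map g.injective,
    fun a => List.mem_map.mpr ⟨g.symm a, σ.2.2 _, g.apply_symm_apply a⟩⟩⟩
  invFun σ := ⟨σ.1.map g.symm, ⟨σ.2.1.map g.symm.injective,
    fun a => List.mem_map.mpr ⟨g a, σ.2.2 _, g.symm_apply_apply a⟩⟩⟩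
  left_inv σ := Subtype.ext (by
    simp only [List.map_map]
    rw [show (⇑g.symm ∘ ⇑g) = id from funext (fun x => g.symm_apply_apply x), List.map_id])
  right_inv σ := Subtype.ext (by
    simp only [List.map_map]
    rw [show (⇑g ∘ ⇑g.symm) = id from funext (fun x => g.apply_symm_apply x), List.map_id])

lemma CB_eq_dd (π σ : {l : List γ // Good l}) (v : γ) :
    CB π.1 σ.1 v = dd (gmap π v) (σ.1.map (gmap π)) := by
  unfold CB dd
  apply Nat.card_congr
  refine Equiv.subtypeEquiv (gmap π) (fun u => ?_)
  rw [before_map (gmap π) σ.1 u v]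
  exact and_congr (gmap_lt_iff π u v) Iff.rfl

lemma sum_CB_eq (π : {l : List γ // Good l}) :
    ∑ σ : {l : List γ // Good l}, ∏ v : γ, (1 + CB π.1 σ.1 v) = DD γ := by
  unfold DD
  rw [← Equiv.sum_comp (goodmap (gmap π)) (fun σ => ∏ v : γ, (1 + dd v σ.1))]
  apply Finset.sum_congr rfl
  intro σ _
  calc ∏ v : γ, (1 + CB π.1 σ.1 v)
      = ∏ v : γ, (1 + dd (gmap π v) ((goodmap (gmap π)) σ).1) := by
        exact Finset.prod_congr rfl (fun v _ => by rw [CB_eq_dd π σ v]; rfl)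
    _ = ∏ w : γ, (1 + dd w ((goodmap (gmap π)) σ).1) :=
        Equiv.prod_comp (gmap π) (fun w => 1 + dd w ((goodmap (gmap π)) σ).1)

lemma card_YY_eq : Nat.card (YY γ) = (Fintype.card γ).factorial * DD γ := by
  rw [card_YY]
  rw [Finset.sum_congr rfl (fun π _ => sum_CB_eq π)]
  rw [Finset.sum_const, smul_eq_mul]
  congr 1
  rw [Finset.card_univ, ← Nat.card_eq_fintype_card, card_good]

end Relabel

section DDrec

variable {γ : Type} [Fintype γ] [LinearOrder γ]

lemma prod_split (m : γ) (f : γ → ℕ) :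
    ∏ v : γ, f v = f m * ∏ v : {a : γ // a ≠ m}, f v.1 := by
  classical
  rw [Finset.prod_eq_mul_prod_sdiff_singleton_of_mem (Finset.mem_univ m) f]
  congr 1
  exact Finset.prod_subtype (p := fun a : γ => a ≠ m) _ (fun x => by simp) f

variable {m : γ}

/-- the underlying list of the insertion map -/
def insL (m : γ) (σ' : {l : List {a : γ // a ≠ m} // Good l}) (k : ℕ) : List γ :=
  (σ'.1.map Subtype.val).insertIdx k m

variable (σ' : {l : List {a : γ // a ≠ m} // Good l}) (k : ℕ)

lemma memL_iff (x : γ) : x ∈ σ'.1.map Subtype.val ↔ x ≠ m := by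
  constructor
  · intro hx
    obtain ⟨u, _, rfl⟩ := List.mem_map.mp hx
    exact u.2
  · intro hx
    exact List.mem_map.mpr ⟨⟨x, hx⟩, σ'.2.2 ⟨x, hx⟩, rfl⟩

lemma nodupL : (σ'.1.map Subtype.val).Nodup := σ'.2.1.map Subtype.val_injective

lemma mnotinL : m ∉ σ'.1.map Subtype.val := fun h => (memL_iff σ' m).mp h rfl

lemma idxL (x : γ) (hx : x ≠ m) :
    (σ'.1.map Subtype.val).idxOf x = σ'.1.idxOf ⟨x, hx⟩ :=
  by rw [subtype_beq_eq]; exact indexOf_map_of_injective Subtype.val_injective σ'.1 ⟨x, hx⟩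

lemma good_insL (hk : k ≤ (σ'.1.map Subtype.val).length) : Good (insL m σ' k) := by
  unfold insL
  have hperm := perm_insertIdx m k _ hk
  constructor
  · exact hperm.nodup_iff.mpr (List.nodup_cons.mpr ⟨mnotinL σ', nodupL σ'⟩)
  · intro a
    rw [hperm.mem_iff]
    by_cases ha : a = m
    · simp [ha]
    · exact List.mem_cons_of_mem _ ((memL_iff σ' a).mpr ha)

lemma indexOf_insL_m (hk : k ≤ (σ'.1.map Subtype.val).length) :
    (insL m σ' k).idxOf m = k :=
  indexOf_insertIdx_self (mnotinL σ') (nodupL σ') hk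

lemma indexOf_insL_x (x : γ) (hx : x ≠ m) :
    (insL m σ' k).idxOf x
      = if σ'.1.idxOf ⟨x, hx⟩ < k then σ'.1.idxOf ⟨x, hx⟩
        else σ'.1.idxOf ⟨x, hx⟩ + 1 := by
  unfold insL
  rw [indexOf_insertIdx (fun h => hx h.symm), idxL σ' x hx]

lemma before_insL {u v : γ} (hu : u ≠ m) (hv : v ≠ m) :
    before (insL m σ' k) u v ↔ before σ'.1 ⟨u, hu⟩ ⟨v, hv⟩ := by
  unfold before
  rw [indexOf_insL_x σ' k u hu, indexOf_insL_x σ' k v hv]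
  rw [← subtype_beq_eq']
  split_ifs <;> omega

lemma dd_insL_max (hm : ∀ b, b ≤ m) (hk : k ≤ (σ'.1.map Subtype.val).length) :
    dd m (insL m σ' k) = k := by
  have hklen : k ≤ σ'.1.length := by
    have := hk
    rwa [List.length_map] at this
  have hbef : ∀ (u : γ) (hu : u ≠ m),
      (before (insL m σ' k) u m ↔ σ'.1.idxOf ⟨u, hu⟩ < k) := by
    intro u hu
    unfold before
    rw [indexOf_insL_m σ' k hk, indexOf_insL_x σ' k u hu]
    split_ifs <;> omega
  unfold dd
  have e : {u : γ // u < m ∧ before (insL m σ' k) u m} ≃ Fin k := by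
    refine ⟨fun u => ⟨σ'.1.idxOf ⟨u.1, ne_of_lt u.2.1⟩,
      (hbef u.1 (ne_of_lt u.2.1)).mp u.2.2⟩,
      fun j => ⟨(σ'.1[(j : ℕ)]'(lt_of_lt_of_le j.2 hklen)).1, ?_, ?_⟩, ?_, ?_⟩
    · exact lt_of_le_of_ne (hm _) (σ'.1[(j : ℕ)]'(lt_of_lt_of_le j.2 hklen)).2
    · refine (hbef _ (σ'.1[(j : ℕ)]'(lt_of_lt_of_le j.2 hklen)).2).mpr ?_
      rw [List.Nodup.idxOf_getElem σ'.2.1 (j : ℕ) (lt_of_lt_of_le j.2 hklen)]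
      exact j.2
    · intro u
      apply Subtype.ext
      show (σ'.1[(σ'.1.idxOf ⟨u.1, ne_of_lt u.2.1⟩ : ℕ)]'_).1 = u.1
      rw [List.getElem_idxOf]
    · intro j
      apply Fin.ext
      show σ'.1.idxOf ⟨(σ'.1[(j : ℕ)]'(lt_of_lt_of_le j.2 hklen)).1, _⟩ = (j : ℕ)
      exact List.Nodup.idxOf_getElem σ'.2.1 (j : ℕ) (lt_of_lt_of_le j.2 hklen)
  rw [Nat.card_congr e, Nat.card_eq_fintype_card, Fintype.card_fin]

lemma dd_insL_ne (hm : ∀ b, b ≤ m) {v : γ} (hv : v ≠ m) :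
    dd v (insL m σ' k) = dd ⟨v, hv⟩ σ'.1 := by
  unfold dd
  apply Nat.card_congr
  refine ⟨fun u => ⟨⟨u.1, ne_of_lt (lt_of_lt_of_le u.2.1 (hm v))⟩,
      Subtype.mk_lt_mk.mpr u.2.1,
      (before_insL σ' k (ne_of_lt (lt_of_lt_of_le u.2.1 (hm v))) hv).mp u.2.2⟩,
    fun u' => ⟨u'.1.1, Subtype.coe_lt_coe.mpr u'.2.1,
      (before_insL σ' k u'.1.2 hv).mpr u'.2.2⟩,
    fun u => rfl, fun u' => rfl⟩

lemma weight_insL (hm : ∀ b, b ≤ m) (hk : k ≤ (σ'.1.map Subtype.val).length) :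
    ∏ v : γ, (1 + dd v (insL m σ' k))
      = (k + 1) * ∏ v : {a : γ // a ≠ m}, (1 + dd v σ'.1) := by
  rw [prod_split m (fun v => 1 + dd v (insL m σ' k))]
  rw [dd_insL_max σ' k hm hk]
  rw [Nat.add_comm 1 k]
  congr 1
  apply Finset.prod_congr rfl
  intro v _
  rw [dd_insL_ne σ' k hm v.2]

theorem DD_formula : ∀ (N : ℕ) (γ : Type) [Fintype γ] [LinearOrder γ],
    Fintype.card γ = N → DD γ * 2 ^ N = N.factorial * (N + 1).factorial := by
  intro N
  induction N with
  | zero =>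
    intro γ _ _ hcard
    haveI : IsEmpty γ := Fintype.card_eq_zero_iff.mp hcard
    have hDD : DD γ = 1 := by
      unfold DD
      have h1 : ∀ σ : {l : List γ // Good l}, ∏ v : γ, (1 + dd v σ.1) = 1 := by
        intro σ
        rw [Finset.univ_eq_empty, Finset.prod_empty]
      rw [Finset.sum_congr rfl (fun σ _ => h1 σ), Finset.sum_const, smul_eq_mul, mul_one,
        Finset.card_univ, ← Nat.card_eq_fintype_card, card_good, hcard]
      rfl
    rw [hDD]
    simp
  | succ N IH =>
    intro γ _ _ hcard
    haveI : Nonempty γ := Fintype.card_pos_iff.mp (by omega)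
    obtain ⟨m, hm⟩ := Finite.exists_max (id : γ → γ)
    have hcard' : Fintype.card {a : γ // a ≠ m} = N := by
      rw [card_subtype_ne, hcard]
      omega
    have hlenL : ∀ σ' : {l : List {a : γ // a ≠ m} // Good l},
        (σ'.1.map Subtype.val).length = N := by
      intro σ'
      rw [List.length_map, σ'.2.length_eq, hcard']
    have hgood : ∀ (x : Fin (N+1) × {l : List {a : γ // a ≠ m} // Good l}),
        Good (insL m x.2 x.1.val) :=
      fun x => good_insL x.2 x.1.val (by rw [hlenL]; omega)
    set Φ : Fin (N+1) × {l : List {a : γ // a ≠ m} // Good l} → {l : List γ // Good l} :=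
      fun x => ⟨insL m x.2 x.1.val, hgood x⟩ with hΦ
    have hinj : Function.Injective Φ := by
      rintro ⟨k₁, σ₁⟩ ⟨k₂, σ₂⟩ h
      have hl : insL m σ₁ k₁.val = insL m σ₂ k₂.val := congrArg Subtype.val h
      have hkk : k₁ = k₂ := by
        apply Fin.ext
        rw [← indexOf_insL_m σ₁ k₁.val (by rw [hlenL]; omega),
          ← indexOf_insL_m σ₂ k₂.val (by rw [hlenL]; omega), hl]
      subst hkk
      have hL : σ₁.1.map Subtype.val = σ₂.1.map Subtype.val := by
        have h2 := congrArg (fun l : List γ => l.eraseIdx k₁.val) hl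
        unfold insL at h2
        simpa only [List.eraseIdx_insertIdx_self] using h2
      have hσ : σ₁ = σ₂ := Subtype.ext (List.map_injective_iff.mpr Subtype.val_injective hL)
      rw [hσ]
    have hbij : Function.Bijective Φ := by
      rw [Fintype.bijective_iff_injective_and_card]
      refine ⟨hinj, ?_⟩
      rw [Fintype.card_prod, Fintype.card_fin,
        ← Nat.card_eq_fintype_card (α := {l : List {a : γ // a ≠ m} // Good l}), card_good,
        ← Nat.card_eq_fintype_card (α := {l : List γ // Good l}), card_good, hcard', hcard,
        Nat.factorial_succ]
    have hsum : DD γ = (∑ k : Fin (N+1), ((k : ℕ) + 1)) * DD {a : γ // a ≠ m} := by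
      unfold DD
      rw [← Fintype.sum_bijective Φ hbij
        (fun x => ((x.1 : ℕ) + 1) * ∏ v : {a : γ // a ≠ m}, (1 + dd v x.2.1))
        (fun σ => ∏ v : γ, (1 + dd v σ.1))
        (fun x => (weight_insL x.2 x.1.val hm (by rw [hlenL]; omega)).symm)]
      rw [Fintype.sum_prod_type]
      dsimp only
      rw [Finset.sum_congr rfl (fun k : Fin (N+1) => fun _ =>
        (Finset.mul_sum Finset.univ
          (fun σ : {l : List {a : γ // a ≠ m} // Good l} =>
            ∏ v : {a : γ // a ≠ m}, (1 + dd v σ.1)) ((k : ℕ) + 1)).symm),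
        ← Finset.sum_mul]
    have hgauss : (∑ k : Fin (N+1), ((k : ℕ) + 1)) * 2 = (N + 1) * (N + 2) := by
      rw [Fin.sum_univ_eq_sum_range (fun i => i + 1)]
      have h5 := Finset.sum_range_id_mul_two (N + 1)
      have hds : ∑ k ∈ Finset.range (N + 1), (k + 1)
          = (∑ k ∈ Finset.range (N + 1), k) + (N + 1) := by
        rw [Finset.sum_add_distrib, Finset.sum_const, Finset.card_range, smul_eq_mul, mul_one]
      rw [hds, Nat.add_mul, h5]
      have hsub : N + 1 - 1 = N := rfl
      rw [hsub]
      ring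
    have hIH := IH {a : γ // a ≠ m} hcard'
    calc DD γ * 2 ^ (N + 1)
        = ((∑ k : Fin (N+1), ((k : ℕ) + 1)) * 2) * (DD {a : γ // a ≠ m} * 2 ^ N) := by
          rw [hsum]; ring
      _ = ((N + 1) * (N + 2)) * (N.factorial * (N + 1).factorial) := by rw [hgauss, hIH]
      _ = (N + 1).factorial * (N + 2).factorial := by
          rw [Nat.factorial_succ (N + 1), Nat.factorial_succ N]; ring

end DDrec

section Main

lemma hk_pos [Fintype γ'] (p : γ' → Option γ') (v : γ') : 0 < hk p v :=
  @Nat.card_pos _ ⟨⟨v, Relation.ReflTransGen.refl⟩⟩ _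

theorem main (γ : Type) [Fintype γ] [LinearOrder γ] :
    ∑ᶠ p : {p : γ → Option γ // Forest p}, ∏ v : γ, 1 / (hk p.1 v : ℚ) ^ 2
      = ((Fintype.card γ + 1).factorial : ℚ) / 2 ^ (Fintype.card γ) := by
  classical
  set N := Fintype.card γ with hNdef
  have hNfac : ((N.factorial : ℚ)) ≠ 0 := by
    exact_mod_cast N.factorial_ne_zero
  have key : ∀ p : {p : γ → Option γ // Forest p},
      ∏ v : γ, 1 / (hk p.1 v : ℚ) ^ 2
        = ((E p.1 : ℚ) * (E p.1 : ℚ)) / (N.factorial : ℚ) ^ 2 := by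
    intro p
    have h3 := hook_formula N γ rfl p.1 p.2
    have hcast : (∏ v : γ, (hk p.1 v : ℚ)) * (E p.1 : ℚ) = (N.factorial : ℚ) := by
      exact_mod_cast congrArg (Nat.cast : ℕ → ℚ) h3
    have hprodne : (∏ v : γ, (hk p.1 v : ℚ)) ≠ 0 := by
      apply Finset.prod_ne_zero_iff.mpr
      intro v _
      have := hk_pos p.1 v
      positivity
    have hEne : (E p.1 : ℚ) ≠ 0 := by
      intro h0
      rw [h0, mul_zero] at hcast
      exact hNfac hcast.symm
    calc ∏ v : γ, 1 / (hk p.1 v : ℚ) ^ 2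
        = ∏ v : γ, ((hk p.1 v : ℚ) ^ 2)⁻¹ := by
          exact Finset.prod_congr rfl (fun v _ => one_div _)
      _ = (∏ v : γ, (hk p.1 v : ℚ) ^ 2)⁻¹ := by rw [Finset.prod_inv_distrib]
      _ = ((∏ v : γ, (hk p.1 v : ℚ)) ^ 2)⁻¹ := by rw [Finset.prod_pow]
      _ = ((E p.1 : ℚ) * (E p.1 : ℚ)) / (N.factorial : ℚ) ^ 2 := by
          rw [← hcast]
          field_simp
  have hsum : ∑ p : {p : γ → Option γ // Forest p}, ((E p.1 : ℚ) * (E p.1 : ℚ))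
      = ((N.factorial * DD γ : ℕ) : ℚ) := by
    have h1 : Nat.card (TT γ) = Nat.card (YY γ) := Nat.card_congr equivTY
    rw [card_TT, card_YY_eq] at h1
    rw [← h1]
    push_cast
    rfl
  have hDD := DD_formula N γ rfl
  rw [finsum_eq_sum_of_fintype]
  rw [Finset.sum_congr rfl (fun p _ => key p), ← Finset.sum_div, hsum]
  have h2 : ((DD γ : ℚ)) * 2 ^ N = (N.factorial : ℚ) * ((N+1).factorial : ℚ) := by
    exact_mod_cast congrArg (Nat.cast : ℕ → ℚ) hDD
  have h2pow : ((2 : ℚ) ^ N) ≠ 0 := by positivity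
  push_cast
  field_simp
  nlinarith [h2, hNfac, sq_nonneg ((N.factorial : ℚ))]

end Main

end HookAux

/-- A hook length formula for labeled forests. -/
theorem hook_squared_formula_forests (n : ℕ) (hn : 1 ≤ n) :
    ∑ᶠ p : {p : Fin n → Option (Fin n) // IsRForest p},
      ∏ v : Fin n, 1 / (hookLen (p : Fin n → Option (Fin n)) v : ℚ) ^ 2
    = ((n + 1).factorial : ℚ) / 2 ^ n := by
  classical
  have h := HookAux.main (Fin n)
  rw [Fintype.card_fin] at h
  show ∑ᶠ p : {p : Fin n → Option (Fin n) // HookAux.Forest p},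
      ∏ v : Fin n, 1 / (HookAux.hk p.1 v : ℚ) ^ 2 = ((n + 1).factorial : ℚ) / 2 ^ n
  exact h
end
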